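/- arXiv:2003.10034 — 5 statements merged into one kernel-verified Lean document; each statement's English description precedes it below -/
import Mathlib

section
/- Let T be the infinite rooted k-ary tree with k ≥ 2, w : T → [0,∞) a weight, s > 1, s' = s/(s−1), and M_s° w = (M°(w^s))^{1/s} where M° is the spherical maximal operator. For all finite subsets E, F ⊆ T and every integer r ≥ 0, the quantity Σ_{x∈E} w(F ∩ S(x,r)) is at most c_s · k^{r s'/(s'+1)} · w(F)^{1/(s'+1)} · (M_s°w(E))^{s'/(s'+1)}, where c_s depends only on s and w(A) = Σ_{y∈A} w(y), M_s°w(E) = Σ_{x∈E} M_s°w(x). -/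
open scoped ENNReal NNReal BigOperators

noncomputable section

/-- Vertices of the infinite rooted `k`-ary tree: finite words over `Fin k`. -/
abbrev V (k : ℕ) := List (Fin k)

/-- Length of the longest common prefix (depth of the deepest common ancestor). -/
def lcpLen {k : ℕ} : List (Fin k) → List (Fin k) → ℕ
  | a :: as, b :: bs => if a = b then lcpLen as bs + 1 else 0
  | _, _ => 0

/-- Graph distance on the infinite rooted `k`-ary tree. -/
def tdist {k : ℕ} (x y : V k) : ℕ :=
  (x.length - lcpLen x y) + (y.length - lcpLen x y)

/-- Sphere of radius `r` centered at `x`. -/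
def sph {k : ℕ} (x : V k) (r : ℕ) : Set (V k) := {y | tdist x y = r}

/-- Closed ball of radius `r` centered at `x`. -/
def ball {k : ℕ} (x : V k) (r : ℕ) : Set (V k) := {y | tdist x y ≤ r}

def sphCard {k : ℕ} (x : V k) (r : ℕ) : ℝ≥0∞ := ((sph x r).ncard : ℝ≥0∞)
def ballCard {k : ℕ} (x : V k) (r : ℕ) : ℝ≥0∞ := ((ball x r).ncard : ℝ≥0∞)

/-- `w(A) = Σ_{y ∈ A} w(y)`, the weighted (counting) measure of `A`. -/
def wsum {k : ℕ} (w : V k → ℝ≥0∞) (A : Set (V k)) : ℝ≥0∞ := ∑' y : A, w ↑y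

/-- Spherical average `A_r° f (x)`. -/
def sphAvg {k : ℕ} (f : V k → ℝ≥0∞) (x : V k) (r : ℕ) : ℝ≥0∞ :=
  wsum f (sph x r) / sphCard x r

/-- Spherical maximal operator `M°`. -/
def Msph {k : ℕ} (f : V k → ℝ≥0∞) (x : V k) : ℝ≥0∞ := ⨆ r : ℕ, sphAvg f x r

/-- Centered Hardy–Littlewood maximal operator `M`. -/
def Mball {k : ℕ} (f : V k → ℝ≥0∞) (x : V k) : ℝ≥0∞ :=
  ⨆ r : ℕ, wsum f (ball x r) / ballCard x r

/-- `|f|` of a real-valued function, as an `ℝ≥0∞`-valued function. -/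
def absE {k : ℕ} (f : V k → ℝ) : V k → ℝ≥0∞ := fun y => ENNReal.ofReal |f y|

/-- `M_s w = (M(w^s))^{1/s}` (centered version). -/
def MsBall {k : ℕ} (s : ℝ) (w : V k → ℝ≥0∞) (x : V k) : ℝ≥0∞ :=
  (Mball (fun y => w y ^ s) x) ^ (1 / s)

/-- `M_s° w = (M°(w^s))^{1/s}` (spherical version). -/
def MsSph {k : ℕ} (s : ℝ) (w : V k → ℝ≥0∞) (x : V k) : ℝ≥0∞ :=
  (Msph (fun y => w y ^ s) x) ^ (1 / s)

/-! ### Auxiliary lemmas -/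

open scoped Classical

namespace Stmt4Aux

variable {k : ℕ}

lemma lcpLen_nil_left (y : V k) : lcpLen ([] : V k) y = 0 := by cases y <;> rfl

lemma lcpLen_nil_right (x : V k) : lcpLen x ([] : V k) = 0 := by cases x <;> rfl

lemma lcpLen_cons (a b : Fin k) (as bs : List (Fin k)) :
    lcpLen (a :: as) (b :: bs) = if a = b then lcpLen as bs + 1 else 0 := rfl

lemma lcpLen_le_left : ∀ x y : V k, lcpLen x y ≤ x.length
  | [], y => by simp [lcpLen_nil_left]
  | a :: as, [] => by simp [lcpLen_nil_right]
  | a :: as, b :: bs => by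
      rw [lcpLen_cons]
      split_ifs with h
      · simpa using lcpLen_le_left as bs
      · exact Nat.zero_le _

lemma lcpLen_le_right : ∀ x y : V k, lcpLen x y ≤ y.length
  | [], y => by simp [lcpLen_nil_left]
  | a :: as, [] => by simp [lcpLen_nil_right]
  | a :: as, b :: bs => by
      rw [lcpLen_cons]
      split_ifs with h
      · simpa using lcpLen_le_right as bs
      · exact Nat.zero_le _

lemma lcpLen_take : ∀ x y : V k, x.take (lcpLen x y) = y.take (lcpLen x y)
  | [], y => by simp [lcpLen_nil_left]
  | a :: as, [] => by simp [lcpLen_nil_right]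
  | a :: as, b :: bs => by
      rw [lcpLen_cons]
      split_ifs with h
      · subst h
        rw [List.take_succ_cons, List.take_succ_cons, lcpLen_take as bs]
      · rfl

lemma lcpLen_append : ∀ x z : V k, lcpLen x (x ++ z) = x.length
  | [], z => by simp [lcpLen_nil_left]
  | a :: as, z => by
      rw [List.cons_append, lcpLen_cons, if_pos rfl, lcpLen_append as z]
      rfl

/-- The part of the sphere `S(x, a+b)` reached by going up `a` steps and down `b` steps. -/
def piece (x : V k) (a b : ℕ) : Set (V k) :=
  {y | a ≤ x.length ∧ lcpLen x y = x.length - a ∧ y.length = (x.length - a) + b}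

lemma piece_subset_sph {x : V k} {a b r : ℕ} (hab : a + b = r) : piece x a b ⊆ sph x r := by
  rintro y ⟨h1, h2, h3⟩
  show tdist x y = r
  unfold tdist
  rw [h2]
  omega

lemma exists_piece_of_mem_sph {x y : V k} {r : ℕ} (hy : y ∈ sph x r) :
    ∃ a, a ≤ r ∧ y ∈ piece x a (r - a) := by
  have h1 := lcpLen_le_left x y
  have h2 := lcpLen_le_right x y
  have hy' : (x.length - lcpLen x y) + (y.length - lcpLen x y) = r := hy
  exact ⟨x.length - lcpLen x y, by omega, by omega, by omega, by omega⟩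

lemma card_filter_le_pow (hk : 0 < k) (G : Finset (V k)) (p : V k → Prop)
    (u : V k) (L m : ℕ) (hp : ∀ y, p y → y.length = L + m ∧ y.take L = u) :
    (G.filter p).card ≤ k ^ m := by
  have key : (G.filter p).card ≤ (Finset.univ : Finset (Fin m → Fin k)).card := by
    apply Finset.card_le_card_of_injOn
        (fun y (i : Fin m) => y.getD (L + (i : ℕ)) ⟨0, hk⟩)
        (fun _ _ => Finset.mem_univ _)
    intro y₁ h₁ y₂ h₂ hf
    rw [Finset.mem_coe, Finset.mem_filter] at h₁ h₂
    obtain ⟨hl₁, ht₁⟩ := hp y₁ h₁.2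
    obtain ⟨hl₂, ht₂⟩ := hp y₂ h₂.2
    have hdrop : y₁.drop L = y₂.drop L := by
      apply List.ext_getElem (by simp [hl₁, hl₂])
      intro i hi₁ hi₂
      have hi : i < m := by
        simp only [List.length_drop, hl₁] at hi₁
        omega
      have e₁ : L + i < y₁.length := by omega
      have e₂ : L + i < y₂.length := by omega
      have hfi := congrFun hf ⟨i, hi⟩
      simp only at hfi
      rw [List.getD_eq_getElem _ _ e₁, List.getD_eq_getElem _ _ e₂] at hfi
      rw [List.getElem_drop, List.getElem_drop]
      exact hfi
    calc y₁ = y₁.take L ++ y₁.drop L := (List.take_append_drop L y₁).symm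
      _ = y₂.take L ++ y₂.drop L := by rw [ht₁, ht₂, hdrop]
      _ = y₂ := List.take_append_drop L y₂
  simpa [Finset.card_univ, Fintype.card_fun] using key

lemma card_filter_pieceY (hk : 0 < k) (F : Finset (V k)) (x : V k) (a b : ℕ) :
    (F.filter (· ∈ piece x a b)).card ≤ k ^ b := by
  apply card_filter_le_pow hk F _ (x.take (x.length - a)) (x.length - a) b
  intro y hy
  obtain ⟨h1, h2, h3⟩ := hy
  refine ⟨h3, ?_⟩
  have h := lcpLen_take x y
  rw [h2] at h
  exact h.symm

lemma card_filter_pieceX (hk : 0 < k) (E : Finset (V k)) (y : V k) (a b : ℕ) :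
    (E.filter (fun x => y ∈ piece x a b)).card ≤ k ^ a := by
  apply card_filter_le_pow hk E _ (y.take (y.length - b)) (y.length - b) a
  intro x hx
  obtain ⟨h1, h2, h3⟩ := hx
  have hle := lcpLen_le_left x y
  constructor
  · omega
  · have h := lcpLen_take x y
    rw [h2] at h
    have hL : x.length - a = y.length - b := by omega
    rw [hL] at h
    exact h

lemma sph_finite (x : V k) (r : ℕ) : (sph x r).Finite := by
  apply (List.finite_length_le (Fin k) (x.length + r)).subset
  intro y hy
  have h1 := lcpLen_le_left x y
  have h2 := lcpLen_le_right x y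
  have hy' : (x.length - lcpLen x y) + (y.length - lcpLen x y) = r := hy
  simp only [Set.mem_setOf_eq]
  omega

lemma sph_nonempty (hk : 0 < k) (x : V k) (r : ℕ) : (sph x r).Nonempty := by
  refine ⟨x ++ List.replicate r ⟨0, hk⟩, ?_⟩
  show tdist x (x ++ List.replicate r ⟨0, hk⟩) = r
  unfold tdist
  rw [lcpLen_append]
  have hlen : (x ++ List.replicate r (⟨0, hk⟩ : Fin k)).length = x.length + r := by simp
  omega

lemma sphCard_ne_zero (hk : 0 < k) (x : V k) (r : ℕ) : sphCard x r ≠ 0 := by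
  have h := (Set.ncard_pos (sph_finite x r)).mpr (sph_nonempty hk x r)
  simp only [sphCard, ne_eq, Nat.cast_eq_zero]
  omega

lemma sphCard_ne_top (x : V k) (r : ℕ) : sphCard x r ≠ ⊤ := ENNReal.natCast_ne_top _

lemma geom_sum_le (hk : 2 ≤ k) : ∀ r : ℕ, ∑ a ∈ Finset.range (r + 1), k ^ a ≤ 2 * k ^ r
  | 0 => by simp
  | (r + 1) => by
      rw [Finset.sum_range_succ]
      have h1 := geom_sum_le hk r
      have h2 : 2 * k ^ r ≤ k ^ (r + 1) := by
        rw [pow_succ]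
        calc 2 * k ^ r = k ^ r * 2 := by ring
          _ ≤ k ^ r * k := Nat.mul_le_mul_left _ hk
      omega

lemma ncard_sph_le (hk : 2 ≤ k) (x : V k) (r : ℕ) : (sph x r).ncard ≤ 2 * k ^ r := by
  set T := (sph_finite x r).toFinset with hT
  have hmem : ∀ y, y ∈ T → y ∈ sph x r := fun y hy => (Set.Finite.mem_toFinset _).1 hy
  have hcard : (sph x r).ncard = T.card := Set.ncard_eq_toFinset_card _ (sph_finite x r)
  rw [hcard]
  have hfilter : ∀ a, (T.filter (· ∈ piece x a (r - a))).card
      = ∑ y ∈ T, ite (y ∈ piece x a (r - a)) 1 0 := fun a => Finset.card_filter _ _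
  have h1 : T.card ≤ ∑ a ∈ Finset.range (r + 1), (T.filter (· ∈ piece x a (r - a))).card := by
    rw [Finset.card_eq_sum_ones]
    calc ∑ _y ∈ T, 1
        ≤ ∑ y ∈ T, ∑ a ∈ Finset.range (r + 1), ite (y ∈ piece x a (r - a)) 1 0 := by
          apply Finset.sum_le_sum
          intro y hy
          obtain ⟨a, har, hap⟩ := exists_piece_of_mem_sph (hmem y hy)
          calc (1 : ℕ) = ite (y ∈ piece x a (r - a)) 1 0 := by rw [if_pos hap]
            _ ≤ ∑ a ∈ Finset.range (r + 1), ite (y ∈ piece x a (r - a)) 1 0 :=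
              Finset.single_le_sum (f := fun a => ite (y ∈ piece x a (r - a)) 1 0)
                (fun _ _ => Nat.zero_le _) (Finset.mem_range.2 (by omega))
      _ = ∑ a ∈ Finset.range (r + 1), ∑ y ∈ T, ite (y ∈ piece x a (r - a)) 1 0 :=
          Finset.sum_comm
      _ = ∑ a ∈ Finset.range (r + 1), (T.filter (· ∈ piece x a (r - a))).card :=
          Finset.sum_congr rfl fun a _ => (hfilter a).symm
  have h2 : ∑ a ∈ Finset.range (r + 1), (T.filter (· ∈ piece x a (r - a))).card
      ≤ ∑ a ∈ Finset.range (r + 1), k ^ (r - a) :=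
    Finset.sum_le_sum fun a _ => card_filter_pieceY (by omega) T x a (r - a)
  have h3 : ∑ a ∈ Finset.range (r + 1), k ^ (r - a) = ∑ a ∈ Finset.range (r + 1), k ^ a := by
    have h := Finset.sum_range_reflect (fun j => k ^ j) (r + 1)
    simpa using h
  have h4 := geom_sum_le hk r
  calc T.card ≤ ∑ a ∈ Finset.range (r + 1), (T.filter (· ∈ piece x a (r - a))).card := h1
    _ ≤ ∑ a ∈ Finset.range (r + 1), k ^ (r - a) := h2
    _ = ∑ a ∈ Finset.range (r + 1), k ^ a := h3
    _ ≤ 2 * k ^ r := h4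

lemma wsum_coe (f : V k → ℝ≥0∞) (G : Finset (V k)) : wsum f ↑G = ∑ y ∈ G, f y :=
  G.tsum_subtype' f

lemma wsum_mono (f : V k → ℝ≥0∞) {A B : Set (V k)} (h : A ⊆ B) : wsum f A ≤ wsum f B := by
  rw [wsum, wsum, tsum_subtype A fun y => f y, tsum_subtype B fun y => f y]
  exact ENNReal.tsum_le_tsum fun y =>
    Set.indicator_le_indicator_of_subset h (fun _ => zero_le) y

lemma wsum_filter (f : V k → ℝ≥0∞) (G : Finset (V k)) (S : Set (V k)) :
    wsum f (↑G ∩ S) = ∑ y ∈ G.filter (· ∈ S), f y := by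
  rw [← wsum_coe]
  congr 1
  ext y
  simp [Finset.mem_filter]

lemma holder_finset (G : Finset (V k)) (f : V k → ℝ≥0∞) {s : ℝ} (hs : 1 < s) :
    ∑ y ∈ G, f y ≤ ((G.card : ℝ≥0∞)) ^ ((s - 1) / s) * (∑ y ∈ G, f y ^ s) ^ (1 / s) := by
  rcases G.eq_empty_or_nonempty with hG | hG
  · simp [hG]
  have hs0 : (0 : ℝ) < s := lt_trans one_pos hs
  have hn0 : ((G.card : ℕ) : ℝ≥0∞) ≠ 0 := by
    simp [hG.card_pos.ne']
  have hnt : ((G.card : ℕ) : ℝ≥0∞) ≠ ⊤ := ENNReal.natCast_ne_top _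
  set n : ℝ≥0∞ := (G.card : ℝ≥0∞) with hn
  have hw : ∑ _y ∈ G, n⁻¹ = 1 := by
    rw [Finset.sum_const, nsmul_eq_mul, ENNReal.mul_inv_cancel hn0 hnt]
  have H := ENNReal.rpow_arith_mean_le_arith_mean_rpow (s := G) (fun _ => n⁻¹) f hw hs.le
  rw [← Finset.mul_sum, ← Finset.mul_sum, ENNReal.mul_rpow_of_nonneg _ _ hs0.le] at H
  have hinv0 : n⁻¹ ≠ 0 := ENNReal.inv_ne_zero.2 hnt
  have hinvt : n⁻¹ ≠ ⊤ := ENNReal.inv_ne_top.2 hn0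
  have H2 : (∑ y ∈ G, f y) ^ s ≤ n ^ (s - 1) * ∑ y ∈ G, f y ^ s := by
    have h3 : n ^ s * (n⁻¹ ^ s * (∑ y ∈ G, f y) ^ s) ≤ n ^ s * (n⁻¹ * ∑ y ∈ G, f y ^ s) :=
      mul_le_mul_right H _
    rw [← mul_assoc, ← ENNReal.mul_rpow_of_nonneg _ _ hs0.le, ENNReal.mul_inv_cancel hn0 hnt,
      ENNReal.one_rpow, one_mul] at h3
    have harith : s + (-1) = s - 1 := by ring
    rwa [← mul_assoc, ← ENNReal.rpow_neg_one n, ← ENNReal.rpow_add _ _ hn0 hnt, harith] at h3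
  have hinvs : (0 : ℝ) ≤ 1 / s := le_of_lt (one_div_pos.mpr hs0)
  have H3 := ENNReal.rpow_le_rpow H2 hinvs
  rw [ENNReal.mul_rpow_of_nonneg _ _ hinvs] at H3
  rw [← ENNReal.rpow_mul, ← ENNReal.rpow_mul] at H3
  have e1 : s * (1 / s) = 1 := by field_simp
  have e2 : (s - 1) * (1 / s) = (s - 1) / s := by ring
  rw [e1, e2, ENNReal.rpow_one] at H3
  exact H3

lemma wsum_sph_le (hk : 0 < k) (f : V k → ℝ≥0∞) (x : V k) (r : ℕ) :
    wsum f (sph x r) ≤ sphCard x r * Msph f x := by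
  have h1 : sphAvg f x r ≤ Msph f x := le_iSup (sphAvg f x) r
  calc wsum f (sph x r) = sphCard x r * (wsum f (sph x r) / sphCard x r) :=
        (ENNReal.mul_div_cancel (sphCard_ne_zero hk x r) (sphCard_ne_top x r)).symm
    _ ≤ sphCard x r * Msph f x := mul_le_mul_right h1 _

lemma perx_bound (hk : 2 ≤ k) {s : ℝ} (hs : 1 < s) (w : V k → ℝ≥0∞) (x : V k)
    (F : Finset (V k)) {a b r : ℕ} (hab : a + b = r) :
    ∑ y ∈ F.filter (· ∈ piece x a b), w y ≤
      (2 : ℝ≥0∞) ^ (1 / s) *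
        ((k : ℝ≥0∞) ^ ((r : ℝ) / s) * (k : ℝ≥0∞) ^ ((b : ℝ) * ((s - 1) / s))) *
        MsSph s w x := by
  have hs0 : (0 : ℝ) < s := lt_trans one_pos hs
  set G := F.filter (· ∈ piece x a b) with hG
  have hsub : (↑G : Set (V k)) ⊆ sph x r := by
    intro y hy
    rw [Finset.mem_coe, hG, Finset.mem_filter] at hy
    exact piece_subset_sph hab hy.2
  have h1 : ∑ y ∈ G, w y ≤ ((G.card : ℝ≥0∞)) ^ ((s - 1) / s) * (∑ y ∈ G, w y ^ s) ^ (1 / s) :=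
    holder_finset G w hs
  have h2 : (∑ y ∈ G, w y ^ s) ≤ wsum (fun y => w y ^ s) (sph x r) := by
    rw [← wsum_coe]
    exact wsum_mono _ hsub
  have h3 : wsum (fun y => w y ^ s) (sph x r)
      ≤ (2 * (k : ℝ≥0∞) ^ (r : ℕ)) * Msph (fun y => w y ^ s) x := by
    refine le_trans (wsum_sph_le (by omega) _ x r) (mul_le_mul_left ?_ _)
    have h := ncard_sph_le hk x r
    calc sphCard x r = (((sph x r).ncard : ℕ) : ℝ≥0∞) := rfl
      _ ≤ ((2 * k ^ r : ℕ) : ℝ≥0∞) := by exact_mod_cast h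
      _ = 2 * (k : ℝ≥0∞) ^ (r : ℕ) := by push_cast; ring
  have h4 : ((G.card : ℝ≥0∞)) ≤ (k : ℝ≥0∞) ^ (b : ℕ) := by
    have h := card_filter_pieceY (by omega : 0 < k) F x a b
    calc ((G.card : ℕ) : ℝ≥0∞) ≤ ((k ^ b : ℕ) : ℝ≥0∞) := by exact_mod_cast h
      _ = (k : ℝ≥0∞) ^ (b : ℕ) := by push_cast; ring
  calc ∑ y ∈ G, w y
      ≤ ((G.card : ℝ≥0∞)) ^ ((s - 1) / s) * (∑ y ∈ G, w y ^ s) ^ (1 / s) := h1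
    _ ≤ ((k : ℝ≥0∞) ^ (b : ℕ)) ^ ((s - 1) / s) *
        ((2 * (k : ℝ≥0∞) ^ (r : ℕ)) * Msph (fun y => w y ^ s) x) ^ (1 / s) :=
        mul_le_mul' (ENNReal.rpow_le_rpow h4 (div_nonneg (by linarith) hs0.le))
          (ENNReal.rpow_le_rpow (le_trans h2 h3) (le_of_lt (one_div_pos.mpr hs0)))
    _ = (2 : ℝ≥0∞) ^ (1 / s) *
        ((k : ℝ≥0∞) ^ ((r : ℝ) / s) * (k : ℝ≥0∞) ^ ((b : ℝ) * ((s - 1) / s))) *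
        MsSph s w x := by
        have hinvs : (0 : ℝ) ≤ 1 / s := le_of_lt (one_div_pos.mpr hs0)
        rw [ENNReal.mul_rpow_of_nonneg _ _ hinvs, ENNReal.mul_rpow_of_nonneg _ _ hinvs]
        rw [← ENNReal.rpow_natCast (k : ℝ≥0∞) b, ← ENNReal.rpow_natCast (k : ℝ≥0∞) r,
          ← ENNReal.rpow_mul, ← ENNReal.rpow_mul]
        rw [MsSph]
        have e1 : (r : ℝ) * (1 / s) = (r : ℝ) / s := by ring
        rw [e1]
        ring

lemma bound1 (hk : 2 ≤ k) (w : V k → ℝ≥0∞) (E F : Finset (V k)) (a b : ℕ) :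
    ∑ x ∈ E, ∑ y ∈ F.filter (· ∈ piece x a b), w y ≤ (k : ℝ≥0∞) ^ (a : ℕ) * wsum w ↑F := by
  calc ∑ x ∈ E, ∑ y ∈ F.filter (· ∈ piece x a b), w y
      = ∑ x ∈ E, ∑ y ∈ F, ite (y ∈ piece x a b) (w y) 0 :=
        Finset.sum_congr rfl fun x _ => Finset.sum_filter _ _
    _ = ∑ y ∈ F, ∑ x ∈ E, ite (y ∈ piece x a b) (w y) 0 := Finset.sum_comm
    _ = ∑ y ∈ F, ((E.filter (fun x => y ∈ piece x a b)).card : ℝ≥0∞) * w y := by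
        refine Finset.sum_congr rfl fun y _ => ?_
        rw [← Finset.sum_filter, Finset.sum_const, nsmul_eq_mul]
    _ ≤ ∑ y ∈ F, (k : ℝ≥0∞) ^ (a : ℕ) * w y := by
        refine Finset.sum_le_sum fun y _ => mul_le_mul_left ?_ _
        have h := card_filter_pieceX (by omega : 0 < k) E y a b
        calc ((E.filter (fun x => y ∈ piece x a b)).card : ℝ≥0∞)
            ≤ ((k ^ a : ℕ) : ℝ≥0∞) := by exact_mod_cast h
          _ = (k : ℝ≥0∞) ^ (a : ℕ) := by push_cast; ring
    _ = (k : ℝ≥0∞) ^ (a : ℕ) * wsum w ↑F := by rw [← Finset.mul_sum, wsum_coe]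

lemma cover_bound (w : V k → ℝ≥0∞) (F : Finset (V k)) (x : V k) (r : ℕ) :
    wsum w (↑F ∩ sph x r) ≤
      ∑ a ∈ Finset.range (r + 1), ∑ y ∈ F.filter (· ∈ piece x a (r - a)), w y := by
  rw [wsum_filter, Finset.sum_filter]
  have hre : ∀ a ∈ Finset.range (r + 1), ∑ y ∈ F.filter (· ∈ piece x a (r - a)), w y
      = ∑ y ∈ F, ite (y ∈ piece x a (r - a)) (w y) 0 := fun a _ => Finset.sum_filter _ _
  rw [Finset.sum_congr rfl hre, Finset.sum_comm]
  refine Finset.sum_le_sum fun y _ => ?_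
  by_cases hy : y ∈ sph x r
  · rw [if_pos hy]
    obtain ⟨a, har, hap⟩ := exists_piece_of_mem_sph hy
    calc w y = ite (y ∈ piece x a (r - a)) (w y) 0 := (if_pos hap).symm
      _ ≤ ∑ a ∈ Finset.range (r + 1), ite (y ∈ piece x a (r - a)) (w y) 0 :=
        Finset.single_le_sum (f := fun a => ite (y ∈ piece x a (r - a)) (w y) 0)
          (fun _ _ => zero_le) (Finset.mem_range.2 (by omega))
  · rw [if_neg hy]
    exact zero_le

lemma minsum {s : ℝ} (hs : 1 < s) {k : ℕ} (hk : 2 ≤ k) (r : ℕ) (W M : ℝ≥0∞)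
    (hW0 : W ≠ 0) (hWt : W ≠ ⊤) (hM0 : M ≠ 0) (hMt : M ≠ ⊤) :
    ∑ a ∈ Finset.range (r + 1),
      min ((k : ℝ≥0∞) ^ (a : ℝ) * W)
        ((2 : ℝ≥0∞) ^ (1 / s) *
          ((k : ℝ≥0∞) ^ ((r : ℝ) / s) *
            (k : ℝ≥0∞) ^ (((r : ℝ) - (a : ℝ)) * ((s - 1) / s))) * M)
      ≤ (2 * (2 + (1 - (2 : ℝ≥0∞) ^ (-((s - 1) / s)))⁻¹)) *
        ((k : ℝ≥0∞) ^ ((r : ℝ) * (s / (s - 1) / (s / (s - 1) + 1))) *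
          (W ^ ((1 : ℝ) / (s / (s - 1) + 1)) * M ^ (s / (s - 1) / (s / (s - 1) + 1)))) := by
  have hs0 : (0 : ℝ) < s := lt_trans one_pos hs
  have hs1 : (0 : ℝ) < s - 1 := by linarith
  have hσ : 0 < s / (s - 1) := div_pos hs0 hs1
  have hσ1 : 0 < s / (s - 1) + 1 := by linarith
  set σ : ℝ := s / (s - 1) with hσdef
  set θ : ℝ := 1 / (σ + 1) with hθdef
  set t : ℝ := σ / (σ + 1) with htdef
  have hθ : 0 < θ := by rw [hθdef]; exact one_div_pos.mpr hσ1
  have ht : 0 < t := by rw [htdef]; exact div_pos hσ hσ1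
  have hθt : θ + t = 1 := by
    rw [hθdef, htdef, ← add_div, add_comm, div_self (ne_of_gt hσ1)]
  have ht1 : t < 1 := by rw [htdef, div_lt_one hσ1]; linarith
  have hk0 : (k : ℝ≥0∞) ≠ 0 := by
    simp only [ne_eq, Nat.cast_eq_zero]
    omega
  have hkt : (k : ℝ≥0∞) ≠ ⊤ := ENNReal.natCast_ne_top _
  have hkpos : (0 : ℝ≥0∞) < (k : ℝ≥0∞) := pos_iff_ne_zero.mpr hk0
  set U : ℕ → ℝ≥0∞ := fun a => (k : ℝ≥0∞) ^ (a : ℝ) * W with hU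
  set Vv : ℕ → ℝ≥0∞ := fun a =>
    (2 : ℝ≥0∞) ^ (1 / s) *
      ((k : ℝ≥0∞) ^ ((r : ℝ) / s) * (k : ℝ≥0∞) ^ (((r : ℝ) - (a : ℝ)) * ((s - 1) / s))) * M
    with hV
  set P : ℝ≥0∞ :=
    (2 : ℝ≥0∞) ^ ((1 / s) * t) * ((k : ℝ≥0∞) ^ ((r : ℝ) * t) * (W ^ θ * M ^ t)) with hP
  have hPid : ∀ a : ℕ, (U a) ^ θ * (Vv a) ^ t = P := by
    intro a
    rw [hU, hV, hP]
    simp only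
    rw [ENNReal.mul_rpow_of_nonneg _ _ hθ.le]
    simp only [ENNReal.mul_rpow_of_nonneg _ _ ht.le]
    simp only [← ENNReal.rpow_mul]
    have hk3 : (k : ℝ≥0∞) ^ ((a : ℝ) * θ) *
        ((k : ℝ≥0∞) ^ (((r : ℝ) / s) * t) *
          (k : ℝ≥0∞) ^ ((((r : ℝ) - (a : ℝ)) * ((s - 1) / s)) * t)) =
        (k : ℝ≥0∞) ^ ((r : ℝ) * t) := by
      rw [← ENNReal.rpow_add _ _ hk0 hkt, ← ENNReal.rpow_add _ _ hk0 hkt]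
      congr 1
      rw [hθdef, htdef, hσdef]
      have h1 : s ≠ 0 := ne_of_gt hs0
      have h2 : s - 1 ≠ 0 := ne_of_gt hs1
      have h3 : s / (s - 1) + 1 ≠ 0 := ne_of_gt hσ1
      field_simp
      ring
    calc (k : ℝ≥0∞) ^ ((a : ℝ) * θ) * W ^ θ *
          ((2 : ℝ≥0∞) ^ ((1 / s) * t) *
            ((k : ℝ≥0∞) ^ (((r : ℝ) / s) * t) *
              (k : ℝ≥0∞) ^ ((((r : ℝ) - (a : ℝ)) * ((s - 1) / s)) * t)) * M ^ t)
        = (2 : ℝ≥0∞) ^ ((1 / s) * t) *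
          (((k : ℝ≥0∞) ^ ((a : ℝ) * θ) *
            ((k : ℝ≥0∞) ^ (((r : ℝ) / s) * t) *
              (k : ℝ≥0∞) ^ ((((r : ℝ) - (a : ℝ)) * ((s - 1) / s)) * t))) * (W ^ θ * M ^ t)) := by
          ring
      _ = (2 : ℝ≥0∞) ^ ((1 / s) * t) * ((k : ℝ≥0∞) ^ ((r : ℝ) * t) * (W ^ θ * M ^ t)) := by
          rw [hk3]
  have claim1 : ∑ a ∈ (Finset.range (r + 1)).filter (fun a => U a ≤ Vv a), U a ≤ 2 * P := by
    set J := (Finset.range (r + 1)).filter (fun a => U a ≤ Vv a) with hJ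
    rcases J.eq_empty_or_nonempty with hE | hne
    · rw [hE]
      simp
    set a0 := J.max' hne with ha0
    have ha0J : a0 ∈ J := J.max'_mem hne
    have ha0UV : U a0 ≤ Vv a0 := (Finset.mem_filter.1 ha0J).2
    have hsub : J ⊆ Finset.range (a0 + 1) := by
      intro a ha
      have h := J.le_max' a ha
      exact Finset.mem_range.2 (by omega)
    have h1 : ∑ a ∈ J, U a ≤ ∑ a ∈ Finset.range (a0 + 1), U a :=
      Finset.sum_le_sum_of_subset hsub
    have h2 : ∑ a ∈ Finset.range (a0 + 1), U a
        = ((∑ a ∈ Finset.range (a0 + 1), k ^ a : ℕ) : ℝ≥0∞) * W := by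
      rw [hU]
      simp only
      rw [← Finset.sum_mul]
      congr 1
      push_cast
      exact Finset.sum_congr rfl fun a _ => (ENNReal.rpow_natCast _ a)
    have h3 : ((∑ a ∈ Finset.range (a0 + 1), k ^ a : ℕ) : ℝ≥0∞)
        ≤ ((2 * k ^ a0 : ℕ) : ℝ≥0∞) := by exact_mod_cast geom_sum_le hk a0
    have h4 : ∑ a ∈ Finset.range (a0 + 1), U a ≤ 2 * U a0 := by
      rw [h2, hU]
      simp only
      calc ((∑ a ∈ Finset.range (a0 + 1), k ^ a : ℕ) : ℝ≥0∞) * W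
          ≤ ((2 * k ^ a0 : ℕ) : ℝ≥0∞) * W := mul_le_mul_left h3 _
        _ = 2 * ((k : ℝ≥0∞) ^ (a0 : ℝ) * W) := by
            push_cast [ENNReal.rpow_natCast]
            ring
    have hU0 : U a0 ≠ 0 := by
      rw [hU]
      exact mul_ne_zero (ENNReal.rpow_pos hkpos hkt).ne' hW0
    have hUt : U a0 ≠ ⊤ := by
      rw [hU]
      exact ENNReal.mul_ne_top (ENNReal.rpow_ne_top_of_nonneg (Nat.cast_nonneg a0) hkt) hWt
    have h5 : U a0 = (U a0) ^ θ * (U a0) ^ t := by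
      rw [← ENNReal.rpow_add _ _ hU0 hUt, hθt, ENNReal.rpow_one]
    have h6 : U a0 ≤ P := by
      rw [h5, ← hPid a0]
      exact mul_le_mul_right (ENNReal.rpow_le_rpow ha0UV ht.le) _
    calc ∑ a ∈ J, U a ≤ 2 * U a0 := le_trans h1 h4
      _ ≤ 2 * P := mul_le_mul_right h6 _
  have claim2 : ∑ a ∈ (Finset.range (r + 1)).filter (fun a => ¬ U a ≤ Vv a), Vv a
      ≤ (1 - (2 : ℝ≥0∞) ^ (-((s - 1) / s)))⁻¹ * P := by
    set J := (Finset.range (r + 1)).filter (fun a => ¬ U a ≤ Vv a) with hJ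
    rcases J.eq_empty_or_nonempty with hE | hne
    · rw [hE]
      simp
    set a1 := J.min' hne with ha1
    have ha1J : a1 ∈ J := J.min'_mem hne
    have ha1VU : Vv a1 ≤ U a1 := le_of_not_ge (Finset.mem_filter.1 ha1J).2
    have ha1r : a1 ≤ r := by
      have h := (Finset.mem_filter.1 ha1J).1
      rw [Finset.mem_range] at h
      omega
    set ρ : ℝ≥0∞ := (k : ℝ≥0∞) ^ (-((s - 1) / s)) with hρ
    have hstep : ∀ a ∈ J, Vv a = Vv a1 * ρ ^ (a - a1) := by
      intro a ha
      have h1 : a1 ≤ a := J.min'_le a ha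
      have hcast : ((a - a1 : ℕ) : ℝ) = (a : ℝ) - (a1 : ℝ) := by
        rw [Nat.cast_sub h1]
      have hkk : (k : ℝ≥0∞) ^ (((r : ℝ) - (a : ℝ)) * ((s - 1) / s))
          = (k : ℝ≥0∞) ^ (((r : ℝ) - (a1 : ℝ)) * ((s - 1) / s)) * ρ ^ (a - a1) := by
        rw [hρ, ← ENNReal.rpow_natCast ((k : ℝ≥0∞) ^ (-((s - 1) / s))) (a - a1),
          ← ENNReal.rpow_mul, ← ENNReal.rpow_add _ _ hk0 hkt]
        congr 1
        rw [hcast]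
        ring
      rw [hV]
      simp only
      rw [hkk]
      ring
    have hinj : ∀ x ∈ J, ∀ y ∈ J, x - a1 = y - a1 → x = y := by
      intro x hx y hy hxy
      have hx1 := J.min'_le x hx
      have hy1 := J.min'_le y hy
      omega
    have hsum : ∑ a ∈ J, Vv a ≤ Vv a1 * ∑' j : ℕ, ρ ^ j := by
      calc ∑ a ∈ J, Vv a = ∑ a ∈ J, Vv a1 * ρ ^ (a - a1) := Finset.sum_congr rfl hstep
        _ = ∑ j ∈ J.image (· - a1), Vv a1 * ρ ^ j :=
            (Finset.sum_image (f := fun j => Vv a1 * ρ ^ j) (g := fun a => a - a1) hinj).symm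
        _ ≤ ∑' j : ℕ, Vv a1 * ρ ^ j := ENNReal.sum_le_tsum _
        _ = Vv a1 * ∑' j : ℕ, ρ ^ j := ENNReal.tsum_mul_left
    have hgeo : ∑' j : ℕ, ρ ^ j = (1 - ρ)⁻¹ := ENNReal.tsum_geometric ρ
    have hρ2 : ρ ≤ (2 : ℝ≥0∞) ^ (-((s - 1) / s)) := by
      rw [hρ, ENNReal.rpow_neg, ENNReal.rpow_neg]
      refine ENNReal.inv_le_inv' (ENNReal.rpow_le_rpow ?_ (div_nonneg hs1.le hs0.le))
      exact_mod_cast hk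
    have hCle : (1 - ρ)⁻¹ ≤ (1 - (2 : ℝ≥0∞) ^ (-((s - 1) / s)))⁻¹ :=
      ENNReal.inv_le_inv' (tsub_le_tsub_left hρ2 1)
    have hra1 : (0 : ℝ) ≤ ((r : ℝ) - (a1 : ℝ)) * ((s - 1) / s) := by
      have h : (a1 : ℝ) ≤ (r : ℝ) := Nat.cast_le.2 ha1r
      have h2 : (0 : ℝ) ≤ (s - 1) / s := div_nonneg hs1.le hs0.le
      nlinarith
    have hV0 : Vv a1 ≠ 0 := by
      rw [hV]
      simp only
      refine mul_ne_zero (mul_ne_zero ?_ (mul_ne_zero ?_ ?_)) hM0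
      · exact (ENNReal.rpow_pos (by norm_num) (by norm_num)).ne'
      · exact (ENNReal.rpow_pos hkpos hkt).ne'
      · exact (ENNReal.rpow_pos hkpos hkt).ne'
    have hVt : Vv a1 ≠ ⊤ := by
      rw [hV]
      simp only
      refine ENNReal.mul_ne_top (ENNReal.mul_ne_top ?_ (ENNReal.mul_ne_top ?_ ?_)) hMt
      · exact ENNReal.rpow_ne_top_of_nonneg (le_of_lt (one_div_pos.mpr hs0)) (by norm_num)
      · exact ENNReal.rpow_ne_top_of_nonneg (div_nonneg (Nat.cast_nonneg _) hs0.le) hkt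
      · exact ENNReal.rpow_ne_top_of_nonneg hra1 hkt
    have h5 : Vv a1 = (Vv a1) ^ θ * (Vv a1) ^ t := by
      rw [← ENNReal.rpow_add _ _ hV0 hVt, hθt, ENNReal.rpow_one]
    have h6 : Vv a1 ≤ P := by
      rw [h5, ← hPid a1]
      exact mul_le_mul_left (ENNReal.rpow_le_rpow ha1VU hθ.le) _
    calc ∑ a ∈ J, Vv a ≤ Vv a1 * (1 - ρ)⁻¹ := by rw [← hgeo]; exact hsum
      _ ≤ P * (1 - (2 : ℝ≥0∞) ^ (-((s - 1) / s)))⁻¹ := mul_le_mul' h6 hCle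
      _ = (1 - (2 : ℝ≥0∞) ^ (-((s - 1) / s)))⁻¹ * P := mul_comm _ _
  show ∑ a ∈ Finset.range (r + 1), min (U a) (Vv a)
      ≤ (2 * (2 + (1 - (2 : ℝ≥0∞) ^ (-((s - 1) / s)))⁻¹)) *
        ((k : ℝ≥0∞) ^ ((r : ℝ) * t) * (W ^ θ * M ^ t))
  have hsplit : ∑ a ∈ Finset.range (r + 1), min (U a) (Vv a)
      = ∑ a ∈ (Finset.range (r + 1)).filter (fun a => U a ≤ Vv a), min (U a) (Vv a)
      + ∑ a ∈ (Finset.range (r + 1)).filter (fun a => ¬ U a ≤ Vv a), min (U a) (Vv a) :=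
    (Finset.sum_filter_add_sum_filter_not _ _ _).symm
  have hbig : ∑ a ∈ Finset.range (r + 1), min (U a) (Vv a)
      ≤ 2 * P + (1 - (2 : ℝ≥0∞) ^ (-((s - 1) / s)))⁻¹ * P := by
    rw [hsplit]
    exact add_le_add
      (le_trans (Finset.sum_le_sum fun a _ => min_le_left _ _) claim1)
      (le_trans (Finset.sum_le_sum fun a _ => min_le_right _ _) claim2)
  have hPle : P ≤ 2 * ((k : ℝ≥0∞) ^ ((r : ℝ) * t) * (W ^ θ * M ^ t)) := by
    rw [hP]
    refine mul_le_mul_left ?_ _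
    have hexp1 : (1 / s) * t ≤ 1 := by
      have h1 : 1 / s ≤ 1 := by
        rw [div_le_one hs0]
        linarith
      nlinarith
    calc (2 : ℝ≥0∞) ^ ((1 / s) * t) ≤ (2 : ℝ≥0∞) ^ (1 : ℝ) :=
        ENNReal.rpow_le_rpow_of_exponent_le (by norm_num) hexp1
      _ = 2 := ENNReal.rpow_one 2
  refine le_trans hbig ?_
  set X := (k : ℝ≥0∞) ^ ((r : ℝ) * t) * (W ^ θ * M ^ t) with hX
  set C := (1 - (2 : ℝ≥0∞) ^ (-((s - 1) / s)))⁻¹ with hCdef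
  calc 2 * P + C * P ≤ 2 * (2 * X) + C * (2 * X) :=
      add_le_add (mul_le_mul_right hPle 2) (mul_le_mul_right hPle C)
    _ = (2 * (2 + C)) * X := by ring

end Stmt4Aux

open Stmt4Aux

/-- Key combinatorial lemma: for finite `E, F ⊆ T_k`, `s > 1`, `s' = s/(s-1)`,
`Σ_{x∈E} w(F ∩ S(x,r)) ≤ c_s k^{r s'/(s'+1)} w(F)^{1/(s'+1)} (M_s°w(E))^{s'/(s'+1)}`,
with `c_s` depending only on `s`. -/
theorem stmt4 (s : ℝ) (hs : 1 < s) :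
    ∃ c : ℝ≥0, ∀ (k : ℕ), 2 ≤ k → ∀ (w : V k → ℝ≥0∞) (E F : Finset (V k)) (r : ℕ),
      ∑ x ∈ E, wsum w (↑F ∩ sph x r) ≤
        (c : ℝ≥0∞) * (k : ℝ≥0∞) ^ ((r : ℝ) * ((s / (s - 1)) / (s / (s - 1) + 1))) *
          (wsum w ↑F) ^ ((1 : ℝ) / (s / (s - 1) + 1)) *
          (∑ x ∈ E, MsSph s w x) ^ ((s / (s - 1)) / (s / (s - 1) + 1)) := by
  have hs0 : (0 : ℝ) < s := lt_trans one_pos hs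
  have hs1 : (0 : ℝ) < s - 1 := by linarith
  have hσ : 0 < s / (s - 1) := div_pos hs0 hs1
  have hσ1 : 0 < s / (s - 1) + 1 := by linarith
  have hθ : 0 < (1 : ℝ) / (s / (s - 1) + 1) := one_div_pos.mpr hσ1
  have ht : 0 < (s / (s - 1)) / (s / (s - 1) + 1) := div_pos hσ hσ1
  set C : ℝ≥0∞ := (1 - (2 : ℝ≥0∞) ^ (-((s - 1) / s)))⁻¹ with hC
  have h2lt1 : (2 : ℝ≥0∞) ^ (-((s - 1) / s)) < 1 := by
    rw [ENNReal.rpow_neg, ENNReal.inv_lt_one]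
    calc (1 : ℝ≥0∞) = (2 : ℝ≥0∞) ^ (0 : ℝ) := by rw [ENNReal.rpow_zero]
      _ < (2 : ℝ≥0∞) ^ ((s - 1) / s) :=
        ENNReal.rpow_lt_rpow_of_exponent_lt (by norm_num) (by norm_num) (div_pos hs1 hs0)
  have hC_ne_top : C ≠ ⊤ := by
    rw [hC, ENNReal.inv_ne_top]
    exact (tsub_pos_of_lt h2lt1).ne'
  set cE : ℝ≥0∞ := 2 * (2 + C) with hcE
  have hcE_ne_top : cE ≠ ⊤ := by
    rw [hcE]
    exact ENNReal.mul_ne_top (by norm_num)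
      (ENNReal.add_ne_top.2 ⟨by norm_num, hC_ne_top⟩)
  have hcE0 : cE ≠ 0 := by
    rw [hcE]
    refine mul_ne_zero (by norm_num) ?_
    have h : (0 : ℝ≥0∞) < 2 + C := lt_of_lt_of_le (by norm_num) le_self_add
    exact h.ne'
  refine ⟨cE.toNNReal, ?_⟩
  intro k hk w E F r
  have hcoe : ((cE.toNNReal : ℝ≥0) : ℝ≥0∞) = cE := ENNReal.coe_toNNReal hcE_ne_top
  rw [hcoe]
  have hkpos : (0 : ℝ≥0∞) < (k : ℝ≥0∞) := by
    refine pos_iff_ne_zero.mpr ?_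
    simp only [ne_eq, Nat.cast_eq_zero]
    omega
  have hkt' : (k : ℝ≥0∞) ≠ ⊤ := ENNReal.natCast_ne_top k
  set W := wsum w ↑F with hW
  set M := ∑ x ∈ E, MsSph s w x with hM
  by_cases hM0 : M = 0
  · -- all weights vanish on all relevant spheres
    have hzero : ∀ x ∈ E, wsum w (↑F ∩ sph x r) = 0 := by
      intro x hx
      have hx0 : MsSph s w x = 0 := by
        rw [hM] at hM0
        exact Finset.sum_eq_zero_iff.mp hM0 x hx
      have hms : Msph (fun y => w y ^ s) x = 0 := by
        rw [MsSph] at hx0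
        rcases ENNReal.rpow_eq_zero_iff.mp hx0 with ⟨h1, _⟩ | ⟨_, h2⟩
        · exact h1
        · exfalso
          have : (0 : ℝ) < 1 / s := by positivity
          linarith
      have havg : wsum (fun y => w y ^ s) (sph x r) = 0 := by
        have h1 : sphAvg (fun y => w y ^ s) x r = 0 :=
          le_antisymm (by rw [← hms]; exact le_iSup (sphAvg (fun y => w y ^ s) x) r) (zero_le)
        rw [sphAvg] at h1
        rcases ENNReal.div_eq_zero_iff.mp h1 with h | h
        · exact h
        · exact absurd h (sphCard_ne_top x r)
      have hw0 : ∀ y ∈ sph x r, w y = 0 := by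
        intro y hy
        have h := (ENNReal.tsum_eq_zero.mp havg) ⟨y, hy⟩
        rcases ENNReal.rpow_eq_zero_iff.mp h with ⟨h1, _⟩ | ⟨_, h2⟩
        · exact h1
        · linarith
      rw [wsum]
      exact ENNReal.tsum_eq_zero.mpr fun z => hw0 z.1 z.2.2
    rw [Finset.sum_eq_zero hzero]
    exact zero_le
  by_cases hW0 : W = 0
  · have hzero : ∀ x ∈ E, wsum w (↑F ∩ sph x r) = 0 := by
      intro x _
      have h := wsum_mono w (Set.inter_subset_left : ↑F ∩ sph x r ⊆ ↑F)
      rw [← hW, hW0] at h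
      exact le_antisymm h (zero_le)
    rw [Finset.sum_eq_zero hzero]
    exact zero_le
  by_cases hWt : W = ⊤
  · have hMne : M ^ ((s / (s - 1)) / (s / (s - 1) + 1)) ≠ 0 := by
      intro h
      rcases ENNReal.rpow_eq_zero_iff.mp h with ⟨h1, _⟩ | ⟨_, h2⟩
      · exact hM0 h1
      · linarith
    have hRHS : cE * (k : ℝ≥0∞) ^ ((r : ℝ) * ((s / (s - 1)) / (s / (s - 1) + 1))) *
        W ^ ((1 : ℝ) / (s / (s - 1) + 1)) *
        M ^ ((s / (s - 1)) / (s / (s - 1) + 1)) = ⊤ := by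
      rw [hWt, ENNReal.top_rpow_of_pos hθ,
        ENNReal.mul_top (mul_ne_zero hcE0 (ENNReal.rpow_pos hkpos hkt').ne')]
      exact ENNReal.top_mul hMne
    rw [hRHS]
    exact le_top
  by_cases hMt : M = ⊤
  · have hWne : W ^ ((1 : ℝ) / (s / (s - 1) + 1)) ≠ 0 := by
      intro h
      rcases ENNReal.rpow_eq_zero_iff.mp h with ⟨h1, _⟩ | ⟨h1, _⟩
      · exact hW0 h1
      · exact hWt h1
    have hRHS : cE * (k : ℝ≥0∞) ^ ((r : ℝ) * ((s / (s - 1)) / (s / (s - 1) + 1))) *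
        W ^ ((1 : ℝ) / (s / (s - 1) + 1)) *
        M ^ ((s / (s - 1)) / (s / (s - 1) + 1)) = ⊤ := by
      rw [hMt, ENNReal.top_rpow_of_pos ht]
      exact ENNReal.mul_top
        (mul_ne_zero (mul_ne_zero hcE0 (ENNReal.rpow_pos hkpos hkt').ne') hWne)
    rw [hRHS]
    exact le_top
  -- main case
  have key := minsum hs hk r W M hW0 hWt hM0 hMt
  have peritem : ∀ a ∈ Finset.range (r + 1),
      (∑ x ∈ E, ∑ y ∈ F.filter (· ∈ piece x a (r - a)), w y) ≤
        min ((k : ℝ≥0∞) ^ (a : ℝ) * W)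
          ((2 : ℝ≥0∞) ^ (1 / s) *
            ((k : ℝ≥0∞) ^ ((r : ℝ) / s) *
              (k : ℝ≥0∞) ^ (((r : ℝ) - (a : ℝ)) * ((s - 1) / s))) * M) := by
    intro a ha
    have har : a ≤ r := by
      rw [Finset.mem_range] at ha
      omega
    have hab : a + (r - a) = r := by omega
    refine le_min ?_ ?_
    · have h := bound1 hk w E F a (r - a)
      rw [← hW] at h
      calc ∑ x ∈ E, ∑ y ∈ F.filter (· ∈ piece x a (r - a)), w y
          ≤ (k : ℝ≥0∞) ^ (a : ℕ) * W := h
        _ = (k : ℝ≥0∞) ^ (a : ℝ) * W := by rw [ENNReal.rpow_natCast]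
    · have hcast : (((r - a : ℕ) : ℝ)) = (r : ℝ) - (a : ℝ) := by
        rw [Nat.cast_sub har]
      calc ∑ x ∈ E, ∑ y ∈ F.filter (· ∈ piece x a (r - a)), w y
          ≤ ∑ x ∈ E, (2 : ℝ≥0∞) ^ (1 / s) *
              ((k : ℝ≥0∞) ^ ((r : ℝ) / s) *
                (k : ℝ≥0∞) ^ (((r - a : ℕ) : ℝ) * ((s - 1) / s))) * MsSph s w x :=
            Finset.sum_le_sum fun x _ => perx_bound hk hs w x F hab
        _ = (2 : ℝ≥0∞) ^ (1 / s) *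
              ((k : ℝ≥0∞) ^ ((r : ℝ) / s) *
                (k : ℝ≥0∞) ^ (((r : ℝ) - (a : ℝ)) * ((s - 1) / s))) * M := by
            rw [← Finset.mul_sum, ← hM, hcast]
  have hcover : ∑ x ∈ E, wsum w (↑F ∩ sph x r)
      ≤ ∑ a ∈ Finset.range (r + 1),
          min ((k : ℝ≥0∞) ^ (a : ℝ) * W)
            ((2 : ℝ≥0∞) ^ (1 / s) *
              ((k : ℝ≥0∞) ^ ((r : ℝ) / s) *
                (k : ℝ≥0∞) ^ (((r : ℝ) - (a : ℝ)) * ((s - 1) / s))) * M) := by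
    calc ∑ x ∈ E, wsum w (↑F ∩ sph x r)
        ≤ ∑ x ∈ E, ∑ a ∈ Finset.range (r + 1),
            ∑ y ∈ F.filter (· ∈ piece x a (r - a)), w y :=
          Finset.sum_le_sum fun x _ => cover_bound w F x r
      _ = ∑ a ∈ Finset.range (r + 1), ∑ x ∈ E,
            ∑ y ∈ F.filter (· ∈ piece x a (r - a)), w y := Finset.sum_comm
      _ ≤ _ := Finset.sum_le_sum peritem
  refine le_trans hcover (le_trans key (le_of_eq ?_))
  rw [hcE]
  ring

end
end

section
/- Let T be the infinite rooted k-ary tree with k ≥ 2, and let w(x) = Σ_{j≥0} k^{−j} χ_{T^j}(x). Then for any fixed n ≥ 1, M^n w ≃_n w, yet there is no constant C such that w({x : Mf(x) > 1}) ≤ C ∫_T |f| M^n w dx for all f; indeed, for f_j = 3χ_{T^j}, one has w({M f_j > 1}) ≥ j while ∫_T f_j M^n w dx ≃_n 1, so the classical Fefferman–Stein inequality with any finite iterate of M fails on T. -/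
open scoped ENNReal NNReal BigOperators

noncomputable section

/-- The radial weight `w(x) = k^{-depth x}`, i.e. `w = Σ_j k^{-j} χ_{T^j}`. -/
def wm (k : ℕ) : V k → ℝ≥0∞ := fun x => (k : ℝ≥0∞) ^ (-(x.length : ℝ))

/-- `f_j = 3 χ_{T^j}`. -/
def fj (k j : ℕ) : V k → ℝ := fun x => if x.length = j then (3 : ℝ) else 0

/-- `M^n`, the `n`-fold iterate of the centered maximal operator. -/
def Mit (k n : ℕ) (w : V k → ℝ≥0∞) : V k → ℝ≥0∞ := (fun g => Mball g)^[n] w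

/-! ### Auxiliary lemmas -/

namespace FSAux
variable {k : ℕ}

/-! #### `lcpLen` and `tdist` basics -/

lemma lcpLen_le_left (x y : V k) : lcpLen x y ≤ x.length := by
  induction x generalizing y with
  | nil => simp [lcpLen]
  | cons a as ih =>
    cases y with
    | nil => simp [lcpLen]
    | cons b bs =>
      by_cases h : a = b <;> simp [lcpLen, h, Nat.succ_le_succ (ih bs)]

lemma lcpLen_le_right (x y : V k) : lcpLen x y ≤ y.length := by
  induction x generalizing y with
  | nil => simp [lcpLen]
  | cons a as ih =>
    cases y with
    | nil => simp [lcpLen]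
    | cons b bs =>
      by_cases h : a = b <;> simp [lcpLen, h, Nat.succ_le_succ (ih bs)]

lemma take_lcpLen_eq (x y : V k) : x.take (lcpLen x y) = y.take (lcpLen x y) := by
  induction x generalizing y with
  | nil => simp [lcpLen]
  | cons a as ih =>
    cases y with
    | nil => simp [lcpLen]
    | cons b bs =>
      by_cases h : a = b <;> simp [lcpLen, h, ih bs]

lemma lcpLen_append (x s : V k) : lcpLen x (x ++ s) = x.length := by
  induction x with
  | nil => cases s <;> simp [lcpLen]
  | cons a as ih => simp [lcpLen, ih]

lemma tdist_append (x s : V k) : tdist x (x ++ s) = s.length := by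
  simp [tdist, lcpLen_append]

lemma eq_of_tdist_eq_zero {x y : V k} (h : tdist x y = 0) : x = y := by
  have h1 := lcpLen_le_left x y
  have h2 := lcpLen_le_right x y
  unfold tdist at h
  have hx : x.length = lcpLen x y := by omega
  have hy : y.length = lcpLen x y := by omega
  calc x = x.take (lcpLen x y) := by rw [← hx, List.take_length]
    _ = y.take (lcpLen x y) := take_lcpLen_eq x y
    _ = y := by rw [← hy, List.take_length]

lemma lcpLen_ge {x y : V k} {m : ℕ} (hm : m ≤ x.length) (h : x.take m <+: y) :
    m ≤ lcpLen x y := by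
  induction x generalizing y m with
  | nil => simp at hm; omega
  | cons a as ih =>
    cases m with
    | zero => omega
    | succ m =>
      cases y with
      | nil => simp [List.take] at h
      | cons b bs =>
        simp only [List.take, List.cons_prefix_cons] at h
        obtain ⟨rfl, h2⟩ := h
        simp only [lcpLen, if_pos]
        have := ih (m := m) (by simpa using hm) h2
        omega

/-! #### Counting lists -/

lemma ncard_length_eq (t : ℕ) : ({z : V k | z.length = t}).ncard = k ^ t := by
  rw [← Nat.card_coe_set_eq]
  have e : {z : V k | z.length = t} ≃ List.Vector (Fin k) t :=
    Equiv.subtypeEquivRight (fun z => Iff.rfl)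
  rw [Nat.card_congr e, Nat.card_eq_fintype_card, card_vector, Fintype.card_fin]

lemma finite_length_eq (t : ℕ) : ({z : V k | z.length = t}).Finite :=
  List.finite_length_eq _ t

lemma finite_length_le (t : ℕ) : ({z : V k | z.length ≤ t}).Finite :=
  List.finite_length_le _ t

lemma two_mul_pow_le (hk : 2 ≤ k) (t : ℕ) : 2 * k ^ t ≤ k ^ (t+1) := by
  calc 2 * k ^ t ≤ k * k ^ t := Nat.mul_le_mul_right _ hk
    _ = k ^ (t+1) := (pow_succ' k t).symm

lemma ncard_length_le (hk : 2 ≤ k) (t : ℕ) :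
    ({z : V k | z.length ≤ t}).ncard ≤ 2 * k ^ t := by
  induction t with
  | zero =>
    have : {z : V k | z.length ≤ 0} = {([] : V k)} := by
      ext z; simp [List.length_eq_zero_iff]
    simp [this]
  | succ t ih =>
    have hset : {z : V k | z.length ≤ t + 1}
        = {z : V k | z.length ≤ t} ∪ {z : V k | z.length = t + 1} := by
      ext z; simp; omega
    have := Set.ncard_union_le {z : V k | z.length ≤ t} {z : V k | z.length = t + 1}
    rw [hset]
    have h2 : 2 * k ^ t + k ^ (t+1) ≤ 2 * k ^ (t+1) := by
      have := two_mul_pow_le hk t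
      omega
    calc _ ≤ _ := this
      _ ≤ 2 * k ^ t + k ^ (t+1) := by rw [ncard_length_eq]; omega
      _ ≤ _ := h2

lemma geom_lt (hk : 2 ≤ k) (t : ℕ) : (∑ i ∈ Finset.range t, k ^ i) ≤ k ^ t - 1 := by
  induction t with
  | zero => simp
  | succ t ih =>
    rw [Finset.sum_range_succ]
    have h1 : 1 ≤ k ^ t := Nat.one_le_pow _ _ (by omega)
    have h2 := two_mul_pow_le hk t
    omega

lemma sum4 (hk : 2 ≤ k) (r : ℕ) :
    (∑ i ∈ Finset.range (r+1), (r - i + 1) * k ^ i) ≤ 4 * k ^ r := by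
  induction r with
  | zero => simp
  | succ r ih =>
    rw [Finset.sum_range_succ]
    have hterm : ∀ i ∈ Finset.range (r+1),
        (r + 1 - i + 1) * k ^ i = (r - i + 1) * k ^ i + k ^ i := by
      intro i hi
      simp only [Finset.mem_range] at hi
      have : r + 1 - i + 1 = (r - i + 1) + 1 := by omega
      rw [this]; ring
    rw [Finset.sum_congr rfl hterm, Finset.sum_add_distrib]
    have hN := geom_lt hk (r+1)
    have h2 := two_mul_pow_le hk r
    have h3 : 1 ≤ k ^ (r+1) := Nat.one_le_pow _ _ (by omega)
    simp only [Nat.sub_self]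
    omega

/-! #### `wsum` basics -/

lemma wsum_finite {f : V k → ℝ≥0∞} {A : Set (V k)} (hA : A.Finite) :
    wsum f A = ∑ y ∈ hA.toFinset, f y := by
  rw [wsum, tsum_subtype]
  rw [tsum_eq_sum (s := hA.toFinset) (by
    intro b hb
    exact Set.indicator_of_notMem (by simpa using hb) f)]
  exact Finset.sum_congr rfl (fun y hy => Set.indicator_of_mem (by simpa using hy) f)

lemma wsum_mono {f : V k → ℝ≥0∞} {A B : Set (V k)} (h : A ⊆ B) : wsum f A ≤ wsum f B :=
  ENNReal.tsum_mono_subtype f h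

lemma wsum_le_wsum {f g : V k → ℝ≥0∞} (h : ∀ y, f y ≤ g y) (A : Set (V k)) :
    wsum f A ≤ wsum g A :=
  ENNReal.tsum_le_tsum (fun y => h y)

lemma wsum_biUnion_le {f : V k → ℝ≥0∞} {ι : Type} (s : Finset ι) (t : ι → Set (V k)) :
    wsum f (⋃ i ∈ s, t i) ≤ ∑ i ∈ s, wsum f (t i) :=
  ENNReal.tsum_biUnion_le f s t

lemma wsum_const_le {f : V k → ℝ≥0∞} {A : Set (V k)} (hA : A.Finite) {c : ℝ≥0∞}
    (hc : ∀ y ∈ A, f y ≤ c) : wsum f A ≤ A.ncard * c := by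
  rw [wsum_finite hA]
  calc ∑ y ∈ hA.toFinset, f y ≤ ∑ y ∈ hA.toFinset, c :=
        Finset.sum_le_sum (fun y hy => hc y (by simpa using hy))
    _ = hA.toFinset.card * c := by rw [Finset.sum_const, nsmul_eq_mul]
    _ = A.ncard * c := by rw [Set.ncard_eq_toFinset_card _ hA]

lemma wsum_const_eq {f : V k → ℝ≥0∞} {A : Set (V k)} (hA : A.Finite) {c : ℝ≥0∞}
    (hc : ∀ y ∈ A, f y = c) : wsum f A = A.ncard * c := by
  rw [wsum_finite hA]
  calc ∑ y ∈ hA.toFinset, f y = ∑ y ∈ hA.toFinset, c :=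
        Finset.sum_congr rfl (fun y hy => hc y (by simpa using hy))
    _ = hA.toFinset.card * c := by rw [Finset.sum_const, nsmul_eq_mul]
    _ = A.ncard * c := by rw [Set.ncard_eq_toFinset_card _ hA]

lemma wsum_singleton (f : V k → ℝ≥0∞) (x : V k) : wsum f {x} = f x := by
  rw [wsum, tsum_singleton]

lemma wsum_union {f : V k → ℝ≥0∞} {A B : Set (V k)} (h : Disjoint A B) :
    wsum f (A ∪ B) = wsum f A + wsum f B :=
  Summable.tsum_union_disjoint h ENNReal.summable ENNReal.summable

/-! #### ENNReal basics -/

lemma kE_ne_zero (hk : 2 ≤ k) : (k : ℝ≥0∞) ≠ 0 := by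
  simp; omega
lemma kE_ne_top : (k : ℝ≥0∞) ≠ ∞ := ENNReal.natCast_ne_top k
lemma kpow_ne_zero (hk : 2 ≤ k) (t : ℕ) : (k : ℝ≥0∞) ^ t ≠ 0 :=
  pow_ne_zero t (kE_ne_zero hk)
lemma kpow_ne_top (t : ℕ) : (k : ℝ≥0∞) ^ t ≠ ∞ := ENNReal.pow_ne_top kE_ne_top

lemma wm_eq (y : V k) : wm k y = ((k : ℝ≥0∞) ^ y.length)⁻¹ := by
  rw [wm, ← ENNReal.rpow_natCast, ← ENNReal.rpow_neg]

/-! #### ball basics -/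

lemma ball_zero (x : V k) : ball x 0 = {x} := by
  ext y
  simp only [ball, Set.mem_setOf_eq, Set.mem_singleton_iff, Nat.le_zero]
  constructor
  · intro h; exact (eq_of_tdist_eq_zero h).symm
  · rintro rfl
    have : tdist y y = 0 := by
      have := lcpLen_append y ([] : V k)
      simp at this
      simp [tdist, this]
    omega

lemma ball_subset_length (x : V k) (r : ℕ) :
    ball x r ⊆ {y : V k | y.length ≤ x.length + r} := by
  intro y hy
  have h1 := lcpLen_le_left x y
  have h2 := lcpLen_le_right x y
  have : tdist x y ≤ r := hy
  unfold tdist at this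
  simp only [Set.mem_setOf_eq]
  omega

lemma ball_finite (x : V k) (r : ℕ) : (ball x r).Finite :=
  (finite_length_le (x.length + r)).subset (ball_subset_length x r)

lemma descSet_subset (x : V k) (r : ℕ) :
    (fun s => x ++ s) '' {s : V k | s.length = r} ⊆ ball x r := by
  rintro y ⟨s, hs, rfl⟩
  simp only [Set.mem_setOf_eq] at hs
  show tdist x (x ++ s) ≤ r
  rw [tdist_append, hs]

lemma descSet_finite (x : V k) (r : ℕ) :
    ((fun s => x ++ s) '' {s : V k | s.length = r}).Finite :=
  (finite_length_eq r).image _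

lemma ncard_descSet (x : V k) (r : ℕ) :
    ((fun s => x ++ s) '' {s : V k | s.length = r}).ncard = k ^ r := by
  rw [Set.ncard_image_of_injective _ (fun a b h => List.append_cancel_left h),
    ncard_length_eq]

lemma kpow_le_ballCard (x : V k) (r : ℕ) : (k : ℝ≥0∞) ^ r ≤ ballCard x r := by
  have h := Set.ncard_le_ncard (descSet_subset x r) (ball_finite x r)
  rw [ncard_descSet] at h
  rw [ballCard]
  calc (k : ℝ≥0∞) ^ r = ((k ^ r : ℕ) : ℝ≥0∞) := by push_cast; ring
    _ ≤ _ := Nat.cast_le.mpr h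

/-! #### the covering estimate for `wsum (wm k)` on balls -/

def D (x : V k) (r l : ℕ) : Set (V k) :=
  {y | x.take l <+: y ∧ y.length ≤ l + (r - (x.length - l))}

lemma ball_subset_biUnion (x : V k) (r : ℕ) :
    ball x r ⊆ ⋃ l ∈ Finset.Icc (x.length - r) x.length, D x r l := by
  intro y hy
  have h1 := lcpLen_le_left x y
  have h2 := lcpLen_le_right x y
  have ht : tdist x y ≤ r := hy
  unfold tdist at ht
  set l := lcpLen x y with hl
  have hpre : x.take l <+: y := by
    rw [take_lcpLen_eq]
    exact List.take_prefix _ _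
  refine Set.mem_iUnion₂.mpr ⟨l, ?_, ⟨hpre, by omega⟩⟩
  rw [Finset.mem_Icc]
  omega

lemma length_mem_D {x : V k} {r l : ℕ} (hl : l ≤ x.length) {y : V k} (hy : y ∈ D x r l) :
    l ≤ y.length ∧ y.length ≤ l + (r - (x.length - l)) := by
  obtain ⟨hpre, hlen⟩ := hy
  have := hpre.length_le
  rw [List.length_take] at this
  constructor
  · omega
  · exact hlen

lemma take_eq_of_mem_D {x : V k} {r l : ℕ} (hl : l ≤ x.length) {y : V k} (hy : y ∈ D x r l) :
    y.take l = x.take l := by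
  obtain ⟨hpre, _⟩ := hy
  have h := List.prefix_iff_eq_take.mp hpre
  have hlen : (x.take l).length = l := by rw [List.length_take]; omega
  rw [hlen] at h
  exact h.symm

lemma wsum_D_le (hk : 2 ≤ k) (x : V k) (r l : ℕ) (hl : l ≤ x.length) :
    wsum (wm k) (D x r l) ≤ ((r - (x.length - l) + 1 : ℕ) : ℝ≥0∞) * ((k : ℝ≥0∞) ^ l)⁻¹ := by
  set T := r - (x.length - l) with hT
  have hcover : D x r l ⊆ ⋃ t ∈ Finset.range (T + 1),
      (D x r l ∩ {y : V k | y.length = l + t}) := by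
    intro y hy
    have h := length_mem_D hl hy
    refine Set.mem_iUnion₂.mpr ⟨y.length - l, ?_, ⟨hy, ?_⟩⟩
    · rw [Finset.mem_range]; omega
    · simp only [Set.mem_setOf_eq]; omega
  calc wsum (wm k) (D x r l) ≤ ∑ t ∈ Finset.range (T + 1),
        wsum (wm k) (D x r l ∩ {y : V k | y.length = l + t}) :=
        le_trans (wsum_mono hcover) (wsum_biUnion_le _ _)
    _ ≤ ∑ t ∈ Finset.range (T + 1), ((k : ℝ≥0∞) ^ l)⁻¹ := by
        apply Finset.sum_le_sum
        intro t _
        have hfin : (D x r l ∩ {y : V k | y.length = l + t}).Finite :=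
          (finite_length_eq (l + t)).subset (Set.inter_subset_right)
        have hval : ∀ y ∈ D x r l ∩ {y : V k | y.length = l + t},
            wm k y = ((k : ℝ≥0∞) ^ (l + t))⁻¹ := by
          rintro y ⟨_, hy2⟩
          rw [wm_eq, hy2]
        have hcard : (D x r l ∩ {y : V k | y.length = l + t}).ncard ≤ k ^ t := by
          rw [← ncard_length_eq (k := k) t]
          refine Set.ncard_le_ncard_of_injOn (fun y => y.drop l) ?_ ?_ (finite_length_eq t)
          · rintro y ⟨hy1, hy2⟩
            simp only [Set.mem_setOf_eq] at hy2 ⊢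
            rw [List.length_drop, hy2]
            omega
          · rintro y₁ ⟨hy₁, hl₁⟩ y₂ ⟨hy₂, hl₂⟩ hdrop
            have hdrop' : y₁.drop l = y₂.drop l := hdrop
            have e₁ : y₁ = y₁.take l ++ y₁.drop l := (List.take_append_drop l y₁).symm
            have e₂ : y₂ = y₂.take l ++ y₂.drop l := (List.take_append_drop l y₂).symm
            rw [e₁, e₂, take_eq_of_mem_D hl hy₁, take_eq_of_mem_D hl hy₂, hdrop']
        calc wsum (wm k) (D x r l ∩ {y : V k | y.length = l + t})
            ≤ (D x r l ∩ {y : V k | y.length = l + t}).ncard * ((k : ℝ≥0∞) ^ (l + t))⁻¹ :=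
              wsum_const_le hfin (fun y hy => le_of_eq (hval y hy))
          _ ≤ ((k ^ t : ℕ) : ℝ≥0∞) * ((k : ℝ≥0∞) ^ (l + t))⁻¹ := by
              apply mul_le_mul_left
              exact_mod_cast Nat.cast_le.mpr hcard
          _ = ((k : ℝ≥0∞) ^ l)⁻¹ := by
              push_cast
              rw [pow_add, ENNReal.mul_inv (Or.inl (kpow_ne_zero hk l)) (Or.inl (kpow_ne_top l)),
                ← mul_assoc, mul_comm ((k:ℝ≥0∞)^t), mul_assoc,
                ENNReal.mul_inv_cancel (kpow_ne_zero hk t) (kpow_ne_top t), mul_one]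
    _ = ((T + 1 : ℕ) : ℝ≥0∞) * ((k : ℝ≥0∞) ^ l)⁻¹ := by
        rw [Finset.sum_const, Finset.card_range, nsmul_eq_mul]

lemma sumIcc_le (hk : 2 ≤ k) (d r : ℕ) :
    (∑ l ∈ Finset.Icc (d - r) d, (r - (d - l) + 1) * k ^ (d - l)) ≤ 4 * k ^ r := by
  have himg : (∑ l ∈ Finset.Icc (d - r) d, (r - (d - l) + 1) * k ^ (d - l))
      = ∑ i ∈ (Finset.Icc (d - r) d).image (fun l => d - l), (r - i + 1) * k ^ i :=
    (Finset.sum_image (f := fun i => (r - i + 1) * k ^ i) (g := fun l => d - l)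
      (by intro a ha b hb h
          simp only [Finset.mem_coe, Finset.mem_Icc] at ha hb
          have h' : d - a = d - b := h
          omega)).symm
  rw [himg]
  calc _ ≤ ∑ i ∈ Finset.range (r + 1), (r - i + 1) * k ^ i := by
        apply Finset.sum_le_sum_of_subset
        intro i hi
        simp only [Finset.mem_image, Finset.mem_Icc] at hi
        obtain ⟨l, hl, rfl⟩ := hi
        simp only [Finset.mem_range]
        omega
    _ ≤ 4 * k ^ r := sum4 hk r

lemma wsum_ball_le (hk : 2 ≤ k) (x : V k) (r : ℕ) :
    wsum (wm k) (ball x r) ≤ 4 * (k : ℝ≥0∞) ^ r * ((k : ℝ≥0∞) ^ x.length)⁻¹ := by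
  set d := x.length with hd
  have key : ∀ l ∈ Finset.Icc (d - r) d,
      ((r - (d - l) + 1 : ℕ) : ℝ≥0∞) * ((k : ℝ≥0∞) ^ l)⁻¹
        = ((r - (d - l) + 1 : ℕ) : ℝ≥0∞) * (k : ℝ≥0∞) ^ (d - l) * ((k : ℝ≥0∞) ^ d)⁻¹ := by
    intro l hl
    simp only [Finset.mem_Icc] at hl
    have hsplit : (k : ℝ≥0∞) ^ d = (k : ℝ≥0∞) ^ (d - l) * (k : ℝ≥0∞) ^ l := by
      rw [← pow_add]; congr 1; omega
    rw [mul_assoc]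
    congr 1
    rw [hsplit, ENNReal.mul_inv (Or.inl (kpow_ne_zero hk _)) (Or.inl (kpow_ne_top _)),
      ← mul_assoc, ENNReal.mul_inv_cancel (kpow_ne_zero hk _) (kpow_ne_top _), one_mul]
  calc wsum (wm k) (ball x r)
      ≤ ∑ l ∈ Finset.Icc (d - r) d, wsum (wm k) (D x r l) :=
        le_trans (wsum_mono (ball_subset_biUnion x r)) (wsum_biUnion_le _ _)
    _ ≤ ∑ l ∈ Finset.Icc (d - r) d,
        ((r - (d - l) + 1 : ℕ) : ℝ≥0∞) * ((k : ℝ≥0∞) ^ l)⁻¹ := by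
        apply Finset.sum_le_sum
        intro l hl
        simp only [Finset.mem_Icc] at hl
        exact wsum_D_le hk x r l hl.2
    _ = (∑ l ∈ Finset.Icc (d - r) d,
        ((r - (d - l) + 1 : ℕ) : ℝ≥0∞) * (k : ℝ≥0∞) ^ (d - l)) * ((k : ℝ≥0∞) ^ d)⁻¹ := by
        rw [Finset.sum_mul]
        exact Finset.sum_congr rfl key
    _ ≤ 4 * (k : ℝ≥0∞) ^ r * ((k : ℝ≥0∞) ^ d)⁻¹ := by
        apply mul_le_mul_left
        have hcast : (∑ l ∈ Finset.Icc (d - r) d,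
            ((r - (d - l) + 1 : ℕ) : ℝ≥0∞) * (k : ℝ≥0∞) ^ (d - l))
            = (((∑ l ∈ Finset.Icc (d - r) d, (r - (d - l) + 1) * k ^ (d - l)) : ℕ) : ℝ≥0∞) := by
          push_cast; ring
        rw [hcast]
        calc _ ≤ ((4 * k ^ r : ℕ) : ℝ≥0∞) := Nat.cast_le.mpr (sumIcc_le hk d r)
          _ = 4 * (k : ℝ≥0∞) ^ r := by push_cast; ring

lemma Mball_wm_le (hk : 2 ≤ k) (x : V k) : Mball (wm k) x ≤ 4 * wm k x := by
  rw [Mball]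
  apply iSup_le
  intro r
  calc wsum (wm k) (ball x r) / ballCard x r
      ≤ (4 * (k : ℝ≥0∞) ^ r * ((k : ℝ≥0∞) ^ x.length)⁻¹) / ((k : ℝ≥0∞) ^ r) :=
        ENNReal.div_le_div (wsum_ball_le hk x r) (kpow_le_ballCard x r)
    _ = 4 * ((k : ℝ≥0∞) ^ x.length)⁻¹ := by
        rw [mul_comm (4 : ℝ≥0∞) _, mul_assoc, mul_comm ((k : ℝ≥0∞) ^ r), mul_div_assoc,
          ENNReal.div_self (kpow_ne_zero hk r) (kpow_ne_top r), mul_one]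
    _ = 4 * wm k x := by rw [wm_eq]

/-! #### maximal operator basics -/

lemma self_le_Mball (f : V k → ℝ≥0∞) (x : V k) : f x ≤ Mball f x := by
  rw [Mball]
  refine le_trans ?_ (le_iSup _ 0)
  rw [ball_zero, wsum_singleton, ballCard, ball_zero]
  simp [Set.ncard_singleton]

lemma Mball_mono {f g : V k → ℝ≥0∞} (h : ∀ y, f y ≤ g y) (x : V k) :
    Mball f x ≤ Mball g x := by
  rw [Mball, Mball]
  exact iSup_mono (fun r => ENNReal.div_le_div (wsum_le_wsum h _) le_rfl)

lemma Mball_const_mul (c : ℝ≥0∞) (f : V k → ℝ≥0∞) (x : V k) :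
    Mball (fun y => c * f y) x = c * Mball f x := by
  rw [Mball, Mball, ENNReal.mul_iSup]
  apply iSup_congr
  intro r
  rw [wsum, wsum, ENNReal.tsum_mul_left, mul_div_assoc]

lemma Mit_succ (n : ℕ) (w : V k → ℝ≥0∞) : Mit k (n+1) w = Mball (Mit k n w) := by
  rw [Mit, Function.iterate_succ_apply', Mit]

lemma wm_le_Mit (n : ℕ) (x : V k) : wm k x ≤ Mit k n (wm k) x := by
  induction n with
  | zero => rw [Mit]; exact le_rfl
  | succ n ih =>
    rw [Mit_succ]
    exact le_trans ih (self_le_Mball _ x)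

lemma Mit_le_wm (hk : 2 ≤ k) (n : ℕ) (x : V k) :
    Mit k n (wm k) x ≤ (4 : ℝ≥0∞) ^ n * wm k x := by
  induction n generalizing x with
  | zero => rw [Mit]; simp
  | succ n ih =>
    rw [Mit_succ]
    calc Mball (Mit k n (wm k)) x ≤ Mball (fun y => (4 : ℝ≥0∞) ^ n * wm k y) x :=
          Mball_mono (fun y => ih y) x
      _ = (4 : ℝ≥0∞) ^ n * Mball (wm k) x := Mball_const_mul _ _ x
      _ ≤ (4 : ℝ≥0∞) ^ n * (4 * wm k x) :=
          mul_le_mul_right (Mball_wm_le hk x) _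
      _ = (4 : ℝ≥0∞) ^ (n+1) * wm k x := by ring

/-! #### level sums of the weight -/

lemma wsum_level (hk : 2 ≤ k) (t : ℕ) : wsum (wm k) {z : V k | z.length = t} = 1 := by
  rw [wsum_const_eq (finite_length_eq t)
    (fun y hy => by rw [wm_eq]; exact congrArg _ (congrArg _ hy)), ncard_length_eq]
  rw [show (((k ^ t : ℕ)) : ℝ≥0∞) = (k : ℝ≥0∞) ^ t by push_cast; ring]
  exact ENNReal.mul_inv_cancel (kpow_ne_zero hk t) (kpow_ne_top t)

lemma wsum_length_le (hk : 2 ≤ k) (j : ℕ) :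
    wsum (wm k) {z : V k | z.length ≤ j} = (j + 1 : ℕ) := by
  induction j with
  | zero =>
    have : {z : V k | z.length ≤ 0} = {z : V k | z.length = 0} := by
      ext z; simp
    rw [this, wsum_level hk 0]
    simp
  | succ j ih =>
    have hset : {z : V k | z.length ≤ j + 1}
        = {z : V k | z.length ≤ j} ∪ {z : V k | z.length = j + 1} := by
      ext z; simp; omega
    have hdisj : Disjoint {z : V k | z.length ≤ j} {z : V k | z.length = j + 1} := by
      rw [Set.disjoint_left]
      intro z hz1 hz2
      simp only [Set.mem_setOf_eq] at hz1 hz2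
      omega
    rw [hset, wsum_union hdisj, ih, wsum_level hk (j+1)]
    push_cast
    ring

/-! #### upper bound on the cardinality of balls -/

lemma wsum_union_le (f : V k → ℝ≥0∞) (A B : Set (V k)) :
    wsum f (A ∪ B) ≤ wsum f A + wsum f B :=
  ENNReal.tsum_union_le f A B

lemma ballCard_eq_wsum (x : V k) (r : ℕ) :
    ballCard x r = wsum (fun _ => (1 : ℝ≥0∞)) (ball x r) := by
  rw [wsum_const_eq (ball_finite x r) (fun _ _ => rfl), mul_one, ballCard]

lemma ncard_eq_wsum {A : Set (V k)} (hA : A.Finite) :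
    wsum (fun _ => (1 : ℝ≥0∞)) A = (A.ncard : ℝ≥0∞) := by
  rw [wsum_const_eq hA (fun _ _ => rfl), mul_one]

def A0 (x : V k) (r : ℕ) : Set (V k) := {y | x <+: y ∧ y.length ≤ x.length + r}

def S (x : V k) (r l : ℕ) : Set (V k) := {y | y ∈ D x r l ∧ ¬ x.take (l+1) <+: y}

lemma ball_subset_A0_union (x : V k) (r : ℕ) :
    ball x r ⊆ A0 x r ∪ ⋃ l ∈ Finset.Ico (x.length - r) x.length, S x r l := by
  intro y hy
  have h1 := lcpLen_le_left x y
  have h2 := lcpLen_le_right x y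
  have ht : tdist x y ≤ r := hy
  unfold tdist at ht
  set l := lcpLen x y with hl
  have hpre : x.take l <+: y := by
    rw [take_lcpLen_eq]
    exact List.take_prefix _ _
  by_cases hld : l = x.length
  · left
    refine ⟨?_, by omega⟩
    rw [hld, List.take_length] at hpre
    exact hpre
  · right
    refine Set.mem_iUnion₂.mpr ⟨l, ?_, ⟨⟨hpre, by omega⟩, ?_⟩⟩
    · rw [Finset.mem_Ico]; omega
    · intro hcon
      have := lcpLen_ge (x := x) (y := y) (m := l + 1) (by omega) hcon
      omega

lemma A0_finite (x : V k) (r : ℕ) : (A0 x r).Finite :=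
  (finite_length_le (x.length + r)).subset (fun y hy => hy.2)

lemma ncard_A0_le (hk : 2 ≤ k) (x : V k) (r : ℕ) : (A0 x r).ncard ≤ 2 * k ^ r := by
  have h : (A0 x r).ncard ≤ ({z : V k | z.length ≤ r}).ncard := by
    refine Set.ncard_le_ncard_of_injOn (fun y => y.drop x.length) ?_ ?_ (finite_length_le r)
    · rintro y ⟨hy1, hy2⟩
      simp only [Set.mem_setOf_eq]
      rw [List.length_drop]
      omega
    · rintro y₁ ⟨hy₁, _⟩ y₂ ⟨hy₂, _⟩ hdrop
      have hdrop' : y₁.drop x.length = y₂.drop x.length := hdrop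
      have e₁ : y₁.take x.length = x := (List.prefix_iff_eq_take.mp hy₁).symm
      have e₂ : y₂.take x.length = x := (List.prefix_iff_eq_take.mp hy₂).symm
      calc y₁ = y₁.take x.length ++ y₁.drop x.length := (List.take_append_drop _ y₁).symm
        _ = y₂.take x.length ++ y₂.drop x.length := by rw [e₁, e₂, hdrop']
        _ = y₂ := List.take_append_drop _ y₂
  exact le_trans h (ncard_length_le hk r)

lemma dropWhile_replicate_append (a : Fin k) (m : ℕ) (s : List (Fin k))
    (hs : s = [] ∨ s.head? ≠ some a) :
    (List.replicate m a ++ s).dropWhile (fun c => decide (c = a)) = s := by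
  induction m with
  | zero =>
    rw [List.replicate_zero, List.nil_append]
    cases s with
    | nil => simp
    | cons b t =>
      rcases hs with h | h
      · exact absurd h (by simp)
      · have hb : b ≠ a := by simpa using h
        simp [List.dropWhile_cons, hb]
  | succ m ih =>
    rw [List.replicate_succ, List.cons_append]
    simpa [List.dropWhile_cons] using ih

lemma S_finite (x : V k) (r l : ℕ) : (S x r l).Finite :=
  ((finite_length_le (l + (r - (x.length - l)))).subset (fun y hy => hy.1.2))

lemma mem_S_drop {x : V k} {r l : ℕ} (hl : l < x.length) {y : V k} (hy : y ∈ S x r l) :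
    y = x.take l ++ y.drop l ∧ (y.drop l).length ≤ r - (x.length - l) ∧
      (y.drop l = [] ∨ (y.drop l).head? ≠ some (x.get ⟨l, hl⟩)) := by
  obtain ⟨hD, hnot⟩ := hy
  have hle : l ≤ x.length := le_of_lt hl
  have htake := take_eq_of_mem_D hle hD
  have hlen := length_mem_D hle hD
  refine ⟨?_, ?_, ?_⟩
  · conv_lhs => rw [← List.take_append_drop l y]
    rw [htake]
  · rw [List.length_drop]; omega
  · by_contra hcon
    push_neg at hcon
    obtain ⟨hne, hhead⟩ := hcon
    obtain ⟨b, t, hbt⟩ := List.exists_cons_of_ne_nil hne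
    have hb : b = x.get ⟨l, hl⟩ := by
      rw [hbt] at hhead
      simpa using hhead
    apply hnot
    have hts : x.take (l + 1) = x.take l ++ [x.get ⟨l, hl⟩] := by
      rw [List.take_succ]
      congr 1
      have hx : x[l]? = some (x.get ⟨l, hl⟩) := by
        rw [List.getElem?_eq_getElem hl]
        rfl
      rw [hx]
      rfl
    refine ⟨t, ?_⟩
    rw [hts]
    conv_rhs => rw [← List.take_append_drop l y]
    rw [htake, hbt, hb, List.append_assoc, List.singleton_append]

lemma ncard_S_le (hk : 2 ≤ k) (x : V k) (r l : ℕ) (hl : l < x.length) :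
    (S x r l).ncard ≤ k ^ (r - (x.length - l)) := by
  set T := r - (x.length - l) with hT
  set a := x.get ⟨l, hl⟩ with ha
  rw [← ncard_length_eq (k := k) T]
  refine Set.ncard_le_ncard_of_injOn
    (fun y => List.replicate (T - (y.length - l)) a ++ y.drop l) ?_ ?_ (finite_length_eq T)
  · intro y hy
    obtain ⟨he, hlen, _⟩ := mem_S_drop hl hy
    simp only [Set.mem_setOf_eq, List.length_append, List.length_replicate, List.length_drop]
    have h1 := length_mem_D (le_of_lt hl) hy.1
    omega
  · intro y₁ h₁ y₂ h₂ heq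
    obtain ⟨he₁, hlen₁, hh₁⟩ := mem_S_drop hl h₁
    obtain ⟨he₂, hlen₂, hh₂⟩ := mem_S_drop hl h₂
    have heq' : List.replicate (T - (y₁.length - l)) a ++ y₁.drop l
        = List.replicate (T - (y₂.length - l)) a ++ y₂.drop l := heq
    have hd₁ := dropWhile_replicate_append a (T - (y₁.length - l)) (y₁.drop l) hh₁
    have hd₂ := dropWhile_replicate_append a (T - (y₂.length - l)) (y₂.drop l) hh₂
    have : y₁.drop l = y₂.drop l := by
      rw [← hd₁, ← hd₂, heq']
    rw [he₁, he₂, this]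

lemma sumIco_le (hk : 2 ≤ k) (d r : ℕ) :
    (∑ l ∈ Finset.Ico (d - r) d, k ^ (r - (d - l))) ≤ k ^ r - 1 := by
  have himg : (∑ l ∈ Finset.Ico (d - r) d, k ^ (r - (d - l)))
      = ∑ i ∈ (Finset.Ico (d - r) d).image (fun l => r - (d - l)), k ^ i :=
    (Finset.sum_image (f := fun i => k ^ i) (g := fun l => r - (d - l))
      (by intro a ha b hb h
          simp only [Finset.mem_coe, Finset.mem_Ico] at ha hb
          have h' : r - (d - a) = r - (d - b) := h
          omega)).symm
  rw [himg]
  calc _ ≤ ∑ i ∈ Finset.range r, k ^ i := by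
        apply Finset.sum_le_sum_of_subset
        intro i hi
        simp only [Finset.mem_image, Finset.mem_Ico] at hi
        obtain ⟨l, hl, rfl⟩ := hi
        simp only [Finset.mem_range]
        omega
    _ ≤ k ^ r - 1 := geom_lt hk r

lemma ballCard_lt (hk : 2 ≤ k) (x : V k) (r : ℕ) :
    ballCard x r < 3 * (k : ℝ≥0∞) ^ r := by
  set d := x.length with hd
  have hle : ballCard x r ≤ ((2 * k ^ r : ℕ) : ℝ≥0∞) + ((k ^ r - 1 : ℕ) : ℝ≥0∞) := by
    rw [ballCard_eq_wsum]
    calc wsum (fun _ => (1:ℝ≥0∞)) (ball x r)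
        ≤ wsum (fun _ => (1:ℝ≥0∞)) (A0 x r ∪ ⋃ l ∈ Finset.Ico (d - r) d, S x r l) :=
          wsum_mono (ball_subset_A0_union x r)
      _ ≤ wsum (fun _ => (1:ℝ≥0∞)) (A0 x r)
            + wsum (fun _ => (1:ℝ≥0∞)) (⋃ l ∈ Finset.Ico (d - r) d, S x r l) :=
          wsum_union_le _ _ _
      _ ≤ ((2 * k ^ r : ℕ) : ℝ≥0∞) + ((k ^ r - 1 : ℕ) : ℝ≥0∞) := by
          apply add_le_add
          · rw [ncard_eq_wsum (A0_finite x r)]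
            exact Nat.cast_le.mpr (ncard_A0_le hk x r)
          · calc wsum (fun _ => (1:ℝ≥0∞)) (⋃ l ∈ Finset.Ico (d - r) d, S x r l)
                ≤ ∑ l ∈ Finset.Ico (d - r) d, wsum (fun _ => (1:ℝ≥0∞)) (S x r l) :=
                  wsum_biUnion_le _ _
              _ ≤ ∑ l ∈ Finset.Ico (d - r) d, ((k ^ (r - (d - l)) : ℕ) : ℝ≥0∞) := by
                  apply Finset.sum_le_sum
                  intro l hl
                  simp only [Finset.mem_Ico] at hl
                  rw [ncard_eq_wsum (S_finite x r l)]
                  exact Nat.cast_le.mpr (ncard_S_le hk x r l hl.2)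
              _ = (((∑ l ∈ Finset.Ico (d - r) d, k ^ (r - (d - l))) : ℕ) : ℝ≥0∞) := by
                  push_cast; ring
              _ ≤ ((k ^ r - 1 : ℕ) : ℝ≥0∞) := Nat.cast_le.mpr (sumIco_le hk d r)
  have hnat : (2 * k ^ r) + (k ^ r - 1) < 3 * k ^ r := by
    have : 1 ≤ k ^ r := Nat.one_le_pow _ _ (by omega)
    omega
  calc ballCard x r ≤ ((2 * k ^ r : ℕ) : ℝ≥0∞) + ((k ^ r - 1 : ℕ) : ℝ≥0∞) := hle
    _ = (((2 * k ^ r) + (k ^ r - 1) : ℕ) : ℝ≥0∞) := by push_cast; ring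
    _ < ((3 * k ^ r : ℕ) : ℝ≥0∞) := by
        exact_mod_cast hnat
    _ = 3 * (k : ℝ≥0∞) ^ r := by push_cast; ring

/-! #### lower bound for the maximal function of `f_j` -/

lemma absE_fj (j : ℕ) (y : V k) :
    absE (fj k j) y = if y.length = j then 3 else 0 := by
  simp only [absE, fj]
  split_ifs with h <;> norm_num

lemma three_kpow_le_wsum (j : ℕ) (x : V k) (r : ℕ) (hxr : x.length + r = j) :
    3 * (k : ℝ≥0∞) ^ r ≤ wsum (absE (fj k j)) (ball x r) := by
  refine le_trans ?_ (wsum_mono (descSet_subset x r))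
  have hvals : ∀ y ∈ (fun s => x ++ s) '' {s : V k | s.length = r},
      absE (fj k j) y = (3 : ℝ≥0∞) := by
    rintro y ⟨s, hs, rfl⟩
    simp only [Set.mem_setOf_eq] at hs
    rw [absE_fj, if_pos (by rw [List.length_append]; omega)]
  rw [wsum_const_eq (descSet_finite x r) hvals, ncard_descSet]
  apply le_of_eq
  rw [mul_comm]
  push_cast
  ring

lemma one_lt_Mball_fj (hk : 2 ≤ k) (j : ℕ) (x : V k) (hd : x.length ≤ j) :
    1 < Mball (absE (fj k j)) x := by
  set r := j - x.length with hr
  have hxr : x.length + r = j := by omega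
  have hnum := three_kpow_le_wsum j x r hxr
  have hden := ballCard_lt hk x r
  have hden0 : ballCard x r ≠ 0 := by
    intro h0
    have hle := kpow_le_ballCard (k := k) x r
    rw [h0, le_zero_iff] at hle
    exact kpow_ne_zero hk r hle
  have hdent : ballCard x r ≠ ∞ := by
    rw [ballCard]; exact ENNReal.natCast_ne_top _
  have h1 : (1 : ℝ≥0∞) < wsum (absE (fj k j)) (ball x r) / ballCard x r := by
    rw [ENNReal.lt_div_iff_mul_lt (Or.inl hden0) (Or.inl hdent), one_mul]
    exact lt_of_lt_of_le hden hnum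
  rw [Mball]
  exact lt_of_lt_of_le h1
    (le_iSup (fun r => wsum (absE (fj k j)) (ball x r) / ballCard x r) r)

lemma part2 (hk : 2 ≤ k) (j : ℕ) :
    (j : ℝ≥0∞) ≤ wsum (wm k) {x : V k | 1 < Mball (absE (fj k j)) x} := by
  have hsub : {x : V k | x.length ≤ j} ⊆ {x : V k | 1 < Mball (absE (fj k j)) x} :=
    fun x hx => one_lt_Mball_fj hk j x hx
  calc (j : ℝ≥0∞) ≤ ((j + 1 : ℕ) : ℝ≥0∞) := Nat.cast_le.mpr (by omega)
    _ = wsum (wm k) {x : V k | x.length ≤ j} := (wsum_length_le hk j).symm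
    _ ≤ _ := wsum_mono hsub

/-! #### the integral `∫ f_j · M^n w` -/

lemma tsum_ite_level (j : ℕ) (F : V k → ℝ≥0∞) :
    ∑' x : V k, (if x.length = j then F x else 0) = wsum F {x : V k | x.length = j} := by
  rw [wsum, tsum_subtype]
  apply tsum_congr
  intro x
  by_cases h : x.length = j <;> simp [Set.indicator_apply, Set.mem_setOf_eq, h]

lemma wsum_const_mul (c : ℝ≥0∞) (f : V k → ℝ≥0∞) (A : Set (V k)) :
    wsum (fun y => c * f y) A = c * wsum f A := by
  rw [wsum, wsum, ENNReal.tsum_mul_left]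

lemma part3_low (hk : 2 ≤ k) (n j : ℕ) :
    (3 : ℝ≥0∞) ≤ ∑' x : V k, absE (fj k j) x * Mit k n (wm k) x := by
  have hpt : ∀ x : V k,
      (if x.length = j then 3 * wm k x else 0) ≤ absE (fj k j) x * Mit k n (wm k) x := by
    intro x
    rw [absE_fj]
    by_cases h : x.length = j
    · simp only [if_pos h]
      exact mul_le_mul_right (wm_le_Mit n x) 3
    · simp [h]
  calc (3 : ℝ≥0∞) = 3 * wsum (wm k) {x : V k | x.length = j} := by
        rw [wsum_level hk j, mul_one]
    _ = wsum (fun y => 3 * wm k y) {x : V k | x.length = j} := (wsum_const_mul _ _ _).symm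
    _ = ∑' x : V k, (if x.length = j then 3 * wm k x else 0) :=
        (tsum_ite_level j (fun y => 3 * wm k y)).symm
    _ ≤ _ := ENNReal.tsum_le_tsum hpt

lemma part3_up (hk : 2 ≤ k) (n j : ℕ) :
    (∑' x : V k, absE (fj k j) x * Mit k n (wm k) x) ≤ 3 * (4 : ℝ≥0∞) ^ n := by
  have hpt : ∀ x : V k,
      absE (fj k j) x * Mit k n (wm k) x
        ≤ (if x.length = j then (3 * (4 : ℝ≥0∞) ^ n) * wm k x else 0) := by
    intro x
    rw [absE_fj]
    by_cases h : x.length = j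
    · simp only [if_pos h]
      calc (3 : ℝ≥0∞) * Mit k n (wm k) x ≤ 3 * ((4 : ℝ≥0∞) ^ n * wm k x) :=
            mul_le_mul_right (Mit_le_wm hk n x) 3
        _ = (3 * (4 : ℝ≥0∞) ^ n) * wm k x := by ring
    · simp [h]
  calc (∑' x : V k, absE (fj k j) x * Mit k n (wm k) x)
      ≤ ∑' x : V k, (if x.length = j then (3 * (4 : ℝ≥0∞) ^ n) * wm k x else 0) :=
        ENNReal.tsum_le_tsum hpt
    _ = wsum (fun y => (3 * (4 : ℝ≥0∞) ^ n) * wm k y) {x : V k | x.length = j} :=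
        tsum_ite_level j _
    _ = (3 * (4 : ℝ≥0∞) ^ n) * wsum (wm k) {x : V k | x.length = j} := wsum_const_mul _ _ _
    _ = 3 * (4 : ℝ≥0∞) ^ n := by rw [wsum_level hk j, mul_one]

end FSAux

/-- Failure of the classical Fefferman–Stein inequality with any iterate `M^n`:
for `w = Σ_j k^{-j} χ_{T^j}` one has `M^n w ≃_n w`, yet
`w({M f_j > 1}) ≥ j` while `∫ f_j M^n w ≃_n 1` for `f_j = 3χ_{T^j}`; hence no
constant `C` satisfies `w({Mf > 1}) ≤ C ∫ |f| M^n w` for all `f`. -/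
theorem stmt9 (k : ℕ) (hk : 2 ≤ k) (n : ℕ) (hn : 1 ≤ n) :
    (∃ c C : ℝ≥0, 0 < c ∧ ∀ x : V k,
        (c : ℝ≥0∞) * wm k x ≤ Mit k n (wm k) x ∧
        Mit k n (wm k) x ≤ (C : ℝ≥0∞) * wm k x) ∧
    (∀ j : ℕ, (j : ℝ≥0∞) ≤
        wsum (wm k) {x : V k | 1 < Mball (absE (fj k j)) x}) ∧
    (∃ c₁ c₂ : ℝ≥0, 0 < c₁ ∧ ∀ j : ℕ,
        (c₁ : ℝ≥0∞) ≤ (∑' x : V k, absE (fj k j) x * Mit k n (wm k) x) ∧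
        (∑' x : V k, absE (fj k j) x * Mit k n (wm k) x) ≤ (c₂ : ℝ≥0∞)) ∧
    ¬ ∃ C : ℝ≥0, ∀ f : V k → ℝ,
        wsum (wm k) {x : V k | 1 < Mball (absE f) x} ≤
          (C : ℝ≥0∞) * ∑' x : V k, ENNReal.ofReal |f x| * Mit k n (wm k) x := by
  refine ⟨⟨1, 4 ^ n, one_pos, fun x => ⟨?_, ?_⟩⟩, fun j => FSAux.part2 hk j,
    ⟨3, 3 * 4 ^ n, by norm_num, fun j => ⟨?_, ?_⟩⟩, ?_⟩
  · simpa using FSAux.wm_le_Mit (k := k) n x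
  · calc Mit k n (wm k) x ≤ (4 : ℝ≥0∞) ^ n * wm k x := FSAux.Mit_le_wm hk n x
      _ = (((4 : ℝ≥0) ^ n : ℝ≥0) : ℝ≥0∞) * wm k x := by push_cast; ring
  · simpa using FSAux.part3_low hk n j
  · calc (∑' x : V k, absE (fj k j) x * Mit k n (wm k) x)
        ≤ 3 * (4 : ℝ≥0∞) ^ n := FSAux.part3_up hk n j
      _ = (((3 * 4 ^ n : ℝ≥0)) : ℝ≥0∞) := by push_cast; ring
  · rintro ⟨C, hC⟩
    set j := ⌊(C * (3 * 4 ^ n) : ℝ≥0)⌋₊ + 1 with hj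
    have h1 : (j : ℝ≥0∞) ≤ wsum (wm k) {x : V k | 1 < Mball (absE (fj k j)) x} :=
      FSAux.part2 hk j
    have h2 := hC (fj k j)
    have h3 : (∑' x : V k, ENNReal.ofReal |fj k j x| * Mit k n (wm k) x)
        ≤ ((3 * 4 ^ n : ℝ≥0) : ℝ≥0∞) := by
      calc (∑' x : V k, ENNReal.ofReal |fj k j x| * Mit k n (wm k) x)
          = (∑' x : V k, absE (fj k j) x * Mit k n (wm k) x) := rfl
        _ ≤ 3 * (4 : ℝ≥0∞) ^ n := FSAux.part3_up hk n j
        _ = ((3 * 4 ^ n : ℝ≥0) : ℝ≥0∞) := by push_cast; ring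
    have h4 : (j : ℝ≥0∞) ≤ ((C * (3 * 4 ^ n) : ℝ≥0) : ℝ≥0∞) := by
      calc (j : ℝ≥0∞)
          ≤ (C : ℝ≥0∞) * ∑' x : V k, ENNReal.ofReal |fj k j x| * Mit k n (wm k) x :=
            le_trans h1 h2
        _ ≤ (C : ℝ≥0∞) * ((3 * 4 ^ n : ℝ≥0) : ℝ≥0∞) := mul_le_mul_right h3 _
        _ = ((C * (3 * 4 ^ n) : ℝ≥0) : ℝ≥0∞) := by push_cast; ring
    have h5 : ((C * (3 * 4 ^ n) : ℝ≥0) : ℝ≥0∞) < (j : ℝ≥0∞) := by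
      have hfl : (C * (3 * 4 ^ n) : ℝ≥0) < (j : ℝ≥0) := by
        rw [hj]
        push_cast
        exact Nat.lt_floor_add_one _
      calc ((C * (3 * 4 ^ n) : ℝ≥0) : ℝ≥0∞) < ((j : ℝ≥0) : ℝ≥0∞) :=
            ENNReal.coe_lt_coe.mpr hfl
        _ = (j : ℝ≥0∞) := by push_cast; ring
    exact absurd (lt_of_le_of_lt h4 h5) (lt_irrefl _)
end
end

section
/- Let T be the infinite rooted k-ary tree with k ≥ 2, w(x) = Σ_{j≥0} k^{−j} χ_{T^j}(x), and f_j = 3χ_{T^j}. Then for every x ∈ T^i with 0 ≤ i ≤ j, M°f_j(x) ≥ 3/2 > 1; consequently ∪_{i=0}^{j} T^i ⊆ {M°f_j > 1} and w({M°f_j > 1}) ≥ j. -/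
open scoped ENNReal NNReal BigOperators

noncomputable section

section Aux

variable {k : ℕ}

lemma lcp_le_left : ∀ x y : List (Fin k), lcpLen x y ≤ x.length
  | [], _ => by simp [lcpLen]
  | _ :: _, [] => by simp [lcpLen]
  | a :: as, b :: bs => by
    by_cases h : a = b <;> simp [lcpLen, h]
    exact lcp_le_left as bs

lemma lcp_le_right : ∀ x y : List (Fin k), lcpLen x y ≤ y.length
  | [], _ => by simp [lcpLen]
  | _ :: _, [] => by simp [lcpLen]
  | a :: as, b :: bs => by
    by_cases h : a = b <;> simp [lcpLen, h]
    exact lcp_le_right as bs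

lemma take_lcp_eq : ∀ x y : List (Fin k), x.take (lcpLen x y) = y.take (lcpLen x y)
  | [], _ => by simp [lcpLen]
  | _ :: _, [] => by simp [lcpLen]
  | a :: as, b :: bs => by
    by_cases h : a = b <;> simp [lcpLen, h]
    exact take_lcp_eq as bs

lemma lcp_append : ∀ x t : List (Fin k), lcpLen x (x ++ t) = x.length
  | [], t => by simp [lcpLen]
  | a :: as, t => by simp [lcpLen, lcp_append as t]

lemma cardLen (k m : ℕ) : Nat.card {t : List (Fin k) // t.length = m} = k ^ m := by
  have : Nat.card {t : List (Fin k) // t.length = m} = Nat.card (List.Vector (Fin k) m) := rfl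
  rw [this, Nat.card_eq_fintype_card, card_vector, Fintype.card_fin]

lemma finLen (k m : ℕ) : {t : List (Fin k) | t.length = m}.Finite :=
  Set.finite_coe_iff.mp (inferInstanceAs (Finite (List.Vector (Fin k) m)))

lemma tsumLen (k m : ℕ) (c : ℝ≥0∞) :
    ∑' _ : {t : List (Fin k) // t.length = m}, c = (k ^ m : ℕ) * c := by
  have F : Fintype {t : List (Fin k) // t.length = m} :=
    inferInstanceAs (Fintype (List.Vector (Fin k) m))
  rw [tsum_fintype, Finset.sum_const, nsmul_eq_mul, Finset.card_univ,
    ← Nat.card_eq_fintype_card, cardLen]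

lemma wsum_mono (w : V k → ℝ≥0∞) {A B : Set (V k)} (h : A ⊆ B) : wsum w A ≤ wsum w B := by
  unfold wsum
  rw [tsum_subtype, tsum_subtype]
  exact ENNReal.tsum_le_tsum fun y =>
    Set.indicator_le_indicator_of_subset h (fun _ => zero_le) y

lemma ncard_biUnion_le (C : ℕ → Set (V k)) (n : ℕ) :
    (⋃ d ∈ Finset.range n, C d).ncard ≤ ∑ d ∈ Finset.range n, (C d).ncard := by
  induction n with
  | zero => simp
  | succ n ih =>
      rw [Finset.sum_range_succ]
      have : (⋃ d ∈ Finset.range (n + 1), C d) =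
          (⋃ d ∈ Finset.range n, C d) ∪ C n := by
        ext y; simp [Finset.mem_range]
        constructor
        · rintro ⟨d, hd, hy⟩
          rcases Nat.lt_or_eq_of_le hd with h | rfl
          · exact Or.inl ⟨d, h, hy⟩
          · exact Or.inr hy
        · rintro (⟨d, hd, hy⟩ | hy)
          · exact ⟨d, Nat.le_of_lt hd, hy⟩
          · exact ⟨n, Nat.le_refl n, hy⟩
      rw [this]
      exact le_trans (Set.ncard_union_le _ _) (by omega)

lemma geom_le' (k n : ℕ) (hk : 2 ≤ k) : ∑ m ∈ Finset.range (n + 1), k ^ m ≤ 2 * k ^ n := by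
  induction n with
  | zero => simp
  | succ n ih =>
      rw [Finset.sum_range_succ]
      calc (∑ m ∈ Finset.range (n+1), k ^ m) + k ^ (n+1) ≤ 2 * k ^ n + k ^ (n+1) := by omega
        _ ≤ 2 * k ^ (n + 1) := by
            rw [pow_succ]
            nlinarith [pow_pos (by omega : 0 < k) n]

end Aux


lemma avg_lower (k : ℕ) (hk : 2 ≤ k) (j i : ℕ) (hij : i ≤ j) (x : V k) (hx : x.length = i) :
    (3 / 2 : ℝ≥0∞) ≤ sphAvg (absE (fj k j)) x (j - i) := by
  set n := j - i with hn
  set f := absE (fj k j) with hfdef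
  have hf3 : ∀ y : V k, y.length = j → f y = 3 := by
    intro y hy
    norm_num [hfdef, absE, fj, hy, abs_of_nonneg]
  set D : Set (V k) := {y | y.length = j ∧ x <+: y} with hD
  have hDsub : D ⊆ sph x n := by
    rintro y ⟨hyl, t, rfl⟩
    have hlt : t.length = j - i := by
      rw [List.length_append, hx] at hyl; omega
    simp only [sph, Set.mem_setOf_eq, tdist, lcp_append, hx, hyl]
    omega
  have eD : D ≃ {t : List (Fin k) // t.length = n} :=
    { toFun := fun y => ⟨(y : V k).drop i, by
        obtain ⟨y, hyl, hp⟩ := y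
        simp only [List.length_drop]
        simp only [hyl, hn]⟩
      invFun := fun t => ⟨x ++ t, by
        refine ⟨?_, t, rfl⟩
        rw [List.length_append, hx, t.2]; omega⟩
      left_inv := by
        rintro ⟨y, hyl, t, rfl⟩
        apply Subtype.ext
        simp [List.drop_left' hx]
      right_inv := by
        rintro ⟨t, ht⟩
        apply Subtype.ext
        simp [List.drop_left' hx] }
  have hwD : wsum f D = ((k ^ n : ℕ) : ℝ≥0∞) * 3 := by
    unfold wsum
    rw [tsum_congr (fun y : D => hf3 y y.2.1)]
    rw [eD.tsum_eq (fun _ => (3 : ℝ≥0∞))]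
    exact tsumLen k n 3
  have hnum : ((3 * k ^ n : ℕ) : ℝ≥0∞) ≤ wsum f (sph x n) := by
    refine le_trans ?_ (wsum_mono f hDsub)
    rw [hwD]; push_cast; ring_nf; exact le_rfl
  -- denominator bound
  have hcardle : (sph x n).ncard ≤ 2 * k ^ n := by
    set C : ℕ → Set (V k) := fun d => (fun t => x.take (i - d) ++ t) '' {t | t.length = n - d}
      with hC
    have hcover : sph x n ⊆ ⋃ d ∈ Finset.range (n + 1), C d := by
      intro y hy
      have h1 : lcpLen x y ≤ i := hx ▸ lcp_le_left x y
      have h2 : lcpLen x y ≤ y.length := lcp_le_right x y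
      have hy' : (i - lcpLen x y) + (y.length - lcpLen x y) = n := by
        simpa only [sph, Set.mem_setOf_eq, tdist, hx] using hy
      have hd : i - lcpLen x y ∈ Finset.range (n + 1) := Finset.mem_range.mpr (by omega)
      refine Set.mem_biUnion hd ⟨y.drop (lcpLen x y), ?_, ?_⟩
      · simp only [Set.mem_setOf_eq, List.length_drop]; omega
      · have h3 : i - (i - lcpLen x y) = lcpLen x y := by omega
        rw [h3, take_lcp_eq x y]
        exact List.take_append_drop _ y
    have hCfin : ∀ d, (C d).Finite := fun d => (finLen k (n - d)).image _
    have hUfin : (⋃ d ∈ Finset.range (n + 1), C d).Finite :=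
      Set.Finite.biUnion (Finset.finite_toSet _) (fun d _ => hCfin d)
    refine le_trans (Set.ncard_le_ncard hcover hUfin) ?_
    refine le_trans (ncard_biUnion_le C (n + 1)) ?_
    have hCle : ∀ d, (C d).ncard ≤ k ^ (n - d) := by
      intro d
      refine le_trans (Set.ncard_image_le (finLen k (n - d))) ?_
      have : {t : List (Fin k) | t.length = n - d}.ncard
          = Nat.card {t : List (Fin k) // t.length = n - d} :=
        (Nat.card_coe_set_eq _).symm
      rw [this, cardLen]
    refine le_trans (Finset.sum_le_sum (fun d _ => hCle d)) ?_
    have hrefl : ∑ d ∈ Finset.range (n + 1), k ^ (n - d)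
        = ∑ m ∈ Finset.range (n + 1), k ^ m := by
      have := Finset.sum_range_reflect (fun m => k ^ m) (n + 1)
      simpa using this
    rw [hrefl]
    exact geom_le' k n hk
  have hden : sphCard x n ≤ ((2 * k ^ n : ℕ) : ℝ≥0∞) := by
    unfold sphCard
    exact_mod_cast hcardle
  have hK0 : ((k ^ n : ℕ) : ℝ≥0∞) ≠ 0 := by
    simp only [ne_eq, Nat.cast_eq_zero, pow_eq_zero_iff']
    omega
  have hKt : ((k ^ n : ℕ) : ℝ≥0∞) ≠ ⊤ := ENNReal.natCast_ne_top _
  calc (3 / 2 : ℝ≥0∞)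
      = (3 * ((k ^ n : ℕ) : ℝ≥0∞)) / (2 * ((k ^ n : ℕ) : ℝ≥0∞)) :=
        (ENNReal.mul_div_mul_right 3 2 hK0 hKt).symm
    _ ≤ wsum f (sph x n) / sphCard x n := by
        refine ENNReal.div_le_div ?_ ?_
        · refine le_trans ?_ hnum; push_cast; exact le_rfl
        · refine le_trans hden ?_; push_cast; exact le_rfl
    _ = sphAvg f x n := rfl

lemma level_one (k : ℕ) (hk : 2 ≤ k) (m : ℕ) :
    wsum (wm k) {x : V k | x.length = m} = 1 := by
  unfold wsum
  have hc : ∀ y : ↥{x : V k | x.length = m}, wm k ↑y = (k : ℝ≥0∞) ^ (-(m : ℝ)) := by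
    rintro ⟨y, hy⟩
    simp only [Set.mem_setOf_eq] at hy
    simp [wm, hy]
  rw [tsum_congr hc]
  rw [show (∑' _ : ↥{x : V k | x.length = m}, (k : ℝ≥0∞) ^ (-(m : ℝ)))
      = ((k ^ m : ℕ) : ℝ≥0∞) * (k : ℝ≥0∞) ^ (-(m : ℝ)) from tsumLen k m _]
  have h0 : (k : ℝ≥0∞) ≠ 0 := by
    simp only [ne_eq, Nat.cast_eq_zero]; omega
  have ht : (k : ℝ≥0∞) ≠ ⊤ := ENNReal.natCast_ne_top _
  push_cast
  rw [← ENNReal.rpow_natCast (k : ℝ≥0∞) m, ← ENNReal.rpow_add _ _ h0 ht]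
  simp

lemma below_wsum (k : ℕ) (hk : 2 ≤ k) : ∀ m : ℕ,
    wsum (wm k) {x : V k | x.length < m} = m
  | 0 => by
      have h : {x : V k | x.length < 0} = ∅ := by ext y; simp
      rw [h]
      unfold wsum
      simp [tsum_empty]
  | (m + 1) => by
      have hsplit : {x : V k | x.length < m + 1}
          = {x : V k | x.length < m} ∪ {x : V k | x.length = m} := by
        ext y; simp only [Set.mem_setOf_eq, Set.mem_union]; omega
      have hdisj : Disjoint {x : V k | x.length < m} {x : V k | x.length = m} :=
        Set.disjoint_left.mpr (fun a ha hb => by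
          simp only [Set.mem_setOf_eq] at ha hb; omega)
      unfold wsum
      rw [hsplit, ENNReal.summable.tsum_union_disjoint hdisj ENNReal.summable]
      have h1 := below_wsum k hk m
      have h2 := level_one k hk m
      unfold wsum at h1 h2
      rw [h1, h2]
      push_cast
      ring

/-- For every `x` of depth `i ≤ j`, `M°f_j(x) ≥ 3/2 > 1`; consequently
`∪_{i≤j} T^i ⊆ {M°f_j > 1}` and `w({M°f_j > 1}) ≥ j`. -/
theorem stmt10 (k : ℕ) (hk : 2 ≤ k) (j : ℕ) :
    (∀ i ≤ j, ∀ x : V k, x.length = i →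
        (3 / 2 : ℝ≥0∞) ≤ Msph (absE (fj k j)) x) ∧
    {x : V k | x.length ≤ j} ⊆ {x : V k | 1 < Msph (absE (fj k j)) x} ∧
    (j : ℝ≥0∞) ≤ wsum (wm k) {x : V k | 1 < Msph (absE (fj k j)) x} := by
  have h1 : ∀ i ≤ j, ∀ x : V k, x.length = i →
      (3 / 2 : ℝ≥0∞) ≤ Msph (absE (fj k j)) x := by
    intro i hi x hxi
    refine le_trans (avg_lower k hk j i hi x hxi) ?_
    exact le_iSup (fun r => sphAvg (absE (fj k j)) x r) (j - i)
  have h2 : {x : V k | x.length ≤ j} ⊆ {x : V k | 1 < Msph (absE (fj k j)) x} := by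
    intro x hx
    simp only [Set.mem_setOf_eq] at hx ⊢
    refine lt_of_lt_of_le ?_ (h1 x.length hx x rfl)
    rw [ENNReal.lt_div_iff_mul_lt (by norm_num) (by norm_num)]
    norm_num
  refine ⟨h1, h2, ?_⟩
  calc (j : ℝ≥0∞) = wsum (wm k) {x : V k | x.length < j} := (below_wsum k hk j).symm
    _ ≤ wsum (wm k) {x : V k | 1 < Msph (absE (fj k j)) x} := by
        refine wsum_mono _ (fun y hy => h2 ?_)
        simp only [Set.mem_setOf_eq] at hy ⊢
        omega
end
end

section
/- On the infinite rooted k-ary tree with k ≥ 2, the radial weight w_β(x) = Σ_{j≥0} k^{jβ} χ_{T^j}(x) satisfies Mw_β ≃ w_β if and only if β ∈ [−1, 0]. -/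
open scoped ENNReal NNReal BigOperators

noncomputable section

/-- The radial weight `w_β(x) = k^{β · depth x}`, i.e. `w_β = Σ_j k^{jβ} χ_{T^j}`. -/
def wrad (k : ℕ) (β : ℝ) : V k → ℝ≥0∞ := fun x => (k : ℝ≥0∞) ^ ((x.length : ℝ) * β)

namespace Stmt11Aux

/- ### lcpLen and tdist basics -/

lemma lcpLen_le_left {k : ℕ} : ∀ (x y : V k), lcpLen x y ≤ x.length
  | [], _ => by simp [lcpLen]
  | _ :: _, [] => by simp [lcpLen]
  | a :: as, b :: bs => by
    rw [lcpLen]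
    split
    · simpa using lcpLen_le_left as bs
    · simp

lemma lcpLen_le_right {k : ℕ} : ∀ (x y : V k), lcpLen x y ≤ y.length
  | [], _ => by simp [lcpLen]
  | _ :: _, [] => by simp [lcpLen]
  | a :: as, b :: bs => by
    rw [lcpLen]
    split
    · simpa using lcpLen_le_right as bs
    · simp

lemma take_lcpLen {k : ℕ} : ∀ (x y : V k), x.take (lcpLen x y) = y.take (lcpLen x y)
  | [], _ => by simp [lcpLen]
  | _ :: _, [] => by simp [lcpLen]
  | a :: as, b :: bs => by
    rw [lcpLen]
    split
    · next h => simp [h, take_lcpLen as bs]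
    · simp

lemma lcpLen_append {k : ℕ} : ∀ (x t : V k), lcpLen x (x ++ t) = x.length
  | [], t => by simp [lcpLen]
  | a :: as, t => by simp [lcpLen, lcpLen_append as t]

lemma lcpLen_self {k : ℕ} (x : V k) : lcpLen x x = x.length := by
  simpa using lcpLen_append x []

lemma lcpLen_nil_right {k : ℕ} (x : V k) : lcpLen x [] = 0 := by
  cases x <;> simp [lcpLen]

lemma lcpLen_nil_left {k : ℕ} (y : V k) : lcpLen [] y = 0 := by
  cases y <;> simp [lcpLen]

lemma tdist_self {k : ℕ} (x : V k) : tdist x x = 0 := by simp [tdist, lcpLen_self]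

lemma tdist_append {k : ℕ} (x t : V k) : tdist x (x ++ t) = t.length := by
  have h := lcpLen_append x t
  simp [tdist, h]

lemma tdist_nil_left {k : ℕ} (y : V k) : tdist [] y = y.length := by
  simp [tdist, lcpLen_nil_left]

lemma tdist_nil_right {k : ℕ} (x : V k) : tdist x [] = x.length := by
  simp [tdist, lcpLen_nil_right]

lemma eq_of_lcpLen {k : ℕ} (x y : V k) (h1 : lcpLen x y = x.length)
    (h2 : lcpLen x y = y.length) : x = y := by
  have hl : x.length = y.length := h1.symm.trans h2
  have h := take_lcpLen x y
  rw [h1] at h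
  rwa [List.take_length, hl, List.take_length] at h

lemma mem_ball_self {k : ℕ} (x : V k) (r : ℕ) : x ∈ ball x r := by
  simp [ball, tdist_self]

lemma ball_zero {k : ℕ} (x : V k) : ball x 0 = {x} := by
  ext y
  simp only [ball, Set.mem_setOf_eq, Set.mem_singleton_iff, Nat.le_zero]
  constructor
  · intro h
    have h1 := lcpLen_le_left x y
    have h2 := lcpLen_le_right x y
    have : lcpLen x y = x.length ∧ lcpLen x y = y.length := by
      unfold tdist at h; omega
    exact (eq_of_lcpLen x y this.1 this.2).symm
  · rintro rfl; simp [tdist_self]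

/- ### Words of bounded length -/

/-- Finset of words of length ≤ L. -/
def lenFin (k L : ℕ) : Finset (V k) :=
  (Finset.range (L+1)).biUnion
    (fun m => (Finset.univ : Finset (Fin m → Fin k)).image List.ofFn)

lemma mem_lenFin {k L : ℕ} (t : V k) : t ∈ lenFin k L ↔ t.length ≤ L := by
  simp only [lenFin, Finset.mem_biUnion, Finset.mem_range, Finset.mem_image,
    Finset.mem_univ, true_and]
  constructor
  · rintro ⟨m, hm, f, rfl⟩
    simpa using Nat.lt_succ_iff.mp hm
  · intro h
    exact ⟨t.length, Nat.lt_succ_of_le h, t.get, List.ofFn_get t⟩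

lemma lenFin_disj {k L : ℕ} : ∀ a ∈ Finset.range (L+1), ∀ b ∈ Finset.range (L+1), a ≠ b →
    Disjoint ((Finset.univ : Finset (Fin a → Fin k)).image List.ofFn)
      ((Finset.univ : Finset (Fin b → Fin k)).image List.ofFn) := by
  intro a _ b _ hab
  simp only [Finset.disjoint_left, Finset.mem_image, Finset.mem_univ, true_and]
  rintro t ⟨f, rfl⟩ ⟨g, hg⟩
  apply hab
  have := congrArg List.length hg
  simpa using this.symm

lemma sum_lenFin {k L : ℕ} (f : ℕ → ℝ≥0∞) :
    ∑ t ∈ lenFin k L, f t.length = ∑ m ∈ Finset.range (L+1), (k^m : ℕ) * f m := by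
  rw [lenFin, Finset.sum_biUnion lenFin_disj]
  refine Finset.sum_congr rfl (fun m _ => ?_)
  rw [Finset.sum_image (by intro a _ b _ h; exact List.ofFn_injective h)]
  simp [List.length_ofFn, Finset.card_univ, mul_comm]

lemma card_lenFin_le {k L : ℕ} : (lenFin k L).card ≤ ∑ m ∈ Finset.range (L+1), k^m := by
  refine (Finset.card_biUnion_le).trans ?_
  refine Finset.sum_le_sum (fun m _ => ?_)
  refine (Finset.card_image_le).trans ?_
  simp [Finset.card_univ]

/- ### Elementary numeric sums -/

lemma geomSum2 {k : ℕ} (hk : 2 ≤ k) : ∀ s, ∑ u ∈ Finset.range (s+1), k^u ≤ 2 * k^s := by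
  intro s
  induction s with
  | zero => simp
  | succ s ih =>
    rw [Finset.sum_range_succ]
    have h2 : 2 * k^s ≤ k^(s+1) := by
      rw [pow_succ]
      calc 2 * k^s = k^s * 2 := by ring
      _ ≤ k^s * k := by exact Nat.mul_le_mul_left _ hk
    omega

lemma card_lenFin_le' {k L : ℕ} (hk : 2 ≤ k) : (lenFin k L).card ≤ 2 * k^L :=
  card_lenFin_le.trans (geomSum2 hk L)

lemma sum_pow_rev {k : ℕ} (hk : 2 ≤ k) (r : ℕ) :
    ∑ i ∈ Finset.range (r+1), k^(r-i) ≤ 2 * k^r := by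
  have hrefl := Finset.sum_range_reflect (fun j => k^j) (r+1)
  simp only [add_tsub_cancel_right] at hrefl
  calc ∑ i ∈ Finset.range (r+1), k^(r-i)
      = ∑ i ∈ Finset.range (r+1), k^(r+1-1-i) := by
        refine Finset.sum_congr rfl (fun i hi => ?_)
        congr 1 <;> omega
    _ = ∑ i ∈ Finset.range (r+1), k^i := hrefl
    _ ≤ 2 * k^r := geomSum2 hk r

lemma S_le {k : ℕ} (hk : 2 ≤ k) : ∀ r, ∑ i ∈ Finset.range (r+1), (r+1-i) * k^i ≤ 4 * k^r := by
  intro r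
  induction r with
  | zero => norm_num
  | succ r ih =>
    have split : ∑ i ∈ Finset.range (r+2), (r+2-i) * k^i
        = (∑ i ∈ Finset.range (r+2), (r+1-i) * k^i) + ∑ i ∈ Finset.range (r+2), k^i := by
      rw [← Finset.sum_add_distrib]
      refine Finset.sum_congr rfl (fun i hi => ?_)
      have : i ≤ r+1 := by simpa [Nat.lt_succ_iff] using hi
      have : r+2-i = (r+1-i) + 1 := by omega
      rw [this, add_mul, one_mul]
    have h1 : ∑ i ∈ Finset.range (r+2), (r+1-i) * k^i
        = ∑ i ∈ Finset.range (r+1), (r+1-i) * k^i := by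
      rw [Finset.sum_range_succ]
      simp
    have h2 : ∑ i ∈ Finset.range (r+2), k^i ≤ 2 * k^(r+1) := geomSum2 hk (r+1)
    have h3 : 4 * k^r ≤ 2 * k^(r+1) := by
      rw [pow_succ]
      calc 4 * k^r = k^r * 4 := by ring
      _ ≤ k^r * (2*k) := by exact Nat.mul_le_mul_left _ (by omega)
      _ = 2 * (k^r * k) := by ring
    calc ∑ i ∈ Finset.range (r+2), (r+2-i) * k^i
        = (∑ i ∈ Finset.range (r+1), (r+1-i) * k^i) + ∑ i ∈ Finset.range (r+2), k^i := by
          rw [split, h1]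
      _ ≤ 4 * k^r + 2 * k^(r+1) := by exact Nat.add_le_add ih h2
      _ ≤ 2 * k^(r+1) + 2 * k^(r+1) := by omega
      _ = 4 * k^(r+1) := by ring

lemma key_nat {k : ℕ} (hk : 2 ≤ k) (r : ℕ) :
    ∑ i ∈ Finset.range (r+1), ∑ m ∈ Finset.range (r-i+1), k^(max i m) ≤ 8 * k^r := by
  have inner : ∀ i, ∑ m ∈ Finset.range (r-i+1), k^(max i m)
      ≤ (r-i+1) * k^i + 2 * k^(r-i) := by
    intro i
    calc ∑ m ∈ Finset.range (r-i+1), k^(max i m)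
        ≤ ∑ m ∈ Finset.range (r-i+1), (k^i + k^m) := by
          refine Finset.sum_le_sum (fun m _ => ?_)
          rcases Nat.le_total i m with h | h
          · rw [Nat.max_eq_right h]; omega
          · rw [Nat.max_eq_left h]; omega
      _ = (r-i+1) * k^i + ∑ m ∈ Finset.range (r-i+1), k^m := by
          rw [Finset.sum_add_distrib, Finset.sum_const, Finset.card_range, smul_eq_mul]
      _ ≤ (r-i+1) * k^i + 2 * k^(r-i) := by
          have := geomSum2 hk (r-i); omega
  calc ∑ i ∈ Finset.range (r+1), ∑ m ∈ Finset.range (r-i+1), k^(max i m)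
      ≤ ∑ i ∈ Finset.range (r+1), ((r-i+1) * k^i + 2 * k^(r-i)) :=
        Finset.sum_le_sum (fun i _ => inner i)
    _ = (∑ i ∈ Finset.range (r+1), (r-i+1) * k^i)
        + 2 * ∑ i ∈ Finset.range (r+1), k^(r-i) := by
        rw [Finset.sum_add_distrib, Finset.mul_sum]
    _ ≤ 4 * k^r + 2 * (2 * k^r) := by
        have hS : ∑ i ∈ Finset.range (r+1), (r-i+1) * k^i ≤ 4 * k^r := by
          have hS' := S_le hk r
          refine le_trans (le_of_eq (Finset.sum_congr rfl (fun i hi => ?_))) hS'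
          have : i ≤ r := by simpa [Nat.lt_succ_iff] using hi
          congr 1
          omega
        have hG := sum_pow_rev hk r
        omega
    _ ≤ 8 * k^r := by omega

/- ### Ball structure -/

section ballstruct
variable {k : ℕ} (x : V k) (r : ℕ)

/-- Index pairs `(i, t)`: `i` = number of levels up to the ancestor, `t` = the tail word. -/
def P (x : V k) (r : ℕ) : Finset (ℕ × V k) :=
  (Finset.range (r+1)).biUnion (fun i => (lenFin k (r-i)).image (fun t => (i, t)))

def eB (x : V k) (y : V k) : ℕ × V k :=
  (x.length - lcpLen x y, y.drop (lcpLen x y))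

def rB (x : V k) (p : ℕ × V k) : V k := x.take (x.length - p.1) ++ p.2

lemma rB_eB (y : V k) : rB x (eB x y) = y := by
  unfold rB eB
  have h1 : x.length - (x.length - lcpLen x y) = lcpLen x y := by
    have := lcpLen_le_left x y; omega
  rw [h1, take_lcpLen x y, List.take_append_drop]

lemma eB_inj : Function.Injective (eB x) :=
  Function.LeftInverse.injective (rB_eB x)

lemma eB_mem {y : V k} (hy : y ∈ ball x r) : eB x y ∈ P x r := by
  have hd : tdist x y ≤ r := hy
  unfold tdist at hd
  have h1 : x.length - lcpLen x y ≤ r := by omega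
  refine Finset.mem_biUnion.mpr ⟨x.length - lcpLen x y, Finset.mem_range.mpr (by omega), ?_⟩
  refine Finset.mem_image.mpr ⟨y.drop (lcpLen x y), ?_, rfl⟩
  rw [mem_lenFin, List.length_drop]
  omega

lemma ball_subset_image : ball x r ⊆ rB x '' ↑(P x r) := by
  intro y hy
  exact ⟨eB x y, eB_mem x r hy, rB_eB x y⟩

lemma ball_finite : (ball x r).Finite :=
  Set.Finite.subset (Set.Finite.image _ (P x r).finite_toSet) (ball_subset_image x r)

lemma card_P_le (hk : 2 ≤ k) : (P x r).card ≤ 4 * k^r := by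
  refine Finset.card_biUnion_le.trans ?_
  calc ∑ i ∈ Finset.range (r+1), ((lenFin k (r-i)).image (fun t => (i, t))).card
      ≤ ∑ i ∈ Finset.range (r+1), 2 * k^(r-i) := by
        refine Finset.sum_le_sum (fun i _ => ?_)
        exact Finset.card_image_le.trans (card_lenFin_le' hk)
    _ ≤ 2 * ∑ i ∈ Finset.range (r+1), k^(r-i) := by rw [Finset.mul_sum]
    _ ≤ 4 * k^r := by
        have hG := sum_pow_rev (k := k) hk r
        omega

lemma ballCard_le (hk : 2 ≤ k) : (ball x r).ncard ≤ 4 * k^r := by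
  have h1 : (ball x r).ncard ≤ ((P x r : Set (ℕ × V k))).ncard := by
    refine Set.ncard_le_ncard_of_injOn (eB x) (fun y hy => eB_mem x r hy)
      ((eB_inj x).injOn) (P x r).finite_toSet
  rw [Set.ncard_coe_finset] at h1
  exact h1.trans (card_P_le x r hk)

lemma ballCard_ge : k^r ≤ (ball x r).ncard := by
  classical
  set Q : Finset (V k) := (Finset.univ : Finset (Fin r → Fin k)).image
    (fun f => x ++ List.ofFn f) with hQ
  have hinj : Function.Injective (fun f : Fin r → Fin k => x ++ List.ofFn f) := by
    intro f g h
    exact List.ofFn_injective (List.append_cancel_left h)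
  have hcard : Q.card = k^r := by
    rw [hQ, Finset.card_image_of_injective _ hinj]
    simp [Finset.card_univ]
  have hsub : (Q : Set (V k)) ⊆ ball x r := by
    intro y hy
    rcases Finset.mem_image.mp hy with ⟨f, _, rfl⟩
    show tdist x _ ≤ r
    rw [tdist_append]
    simp
  calc k^r = (Q : Set (V k)).ncard := by rw [Set.ncard_coe_finset, hcard]
    _ ≤ (ball x r).ncard := Set.ncard_le_ncard hsub (ball_finite x r)

lemma wsum_eq_sum {A : Set (V k)} (hA : A.Finite) (w : V k → ℝ≥0∞) :
    wsum w A = ∑ y ∈ hA.toFinset, w y := by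
  rw [wsum, tsum_subtype A w, tsum_eq_sum (s := hA.toFinset)
    (fun y hy => Set.indicator_of_notMem (by simpa using hy) w)]
  exact Finset.sum_congr rfl (fun y hy => Set.indicator_of_mem (by simpa using hy) w)

lemma le_wsum {A : Set (V k)} (w : V k → ℝ≥0∞) {a : V k} (ha : a ∈ A) : w a ≤ wsum w A :=
  ENNReal.le_tsum (⟨a, ha⟩ : A)

end ballstruct

/- ### The main weight estimate for β ∈ [-1, 0] -/

section weight
variable {k : ℕ} {β : ℝ}

lemma wsum_ball_le (hk : 2 ≤ k) (hβ1 : -1 ≤ β) (hβ0 : β ≤ 0) (x : V k) (r : ℕ) :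
    wsum (wrad k β) (ball x r) ≤ ((8 * k^r : ℕ) : ℝ≥0∞) * wrad k β x := by
  classical
  have hk0 : (k : ℝ≥0∞) ≠ 0 := by
    simp only [ne_eq, Nat.cast_eq_zero]; omega
  have hkt : (k : ℝ≥0∞) ≠ ⊤ := ENNReal.natCast_ne_top k
  have hk1 : (1 : ℝ≥0∞) ≤ (k : ℝ≥0∞) := by
    exact_mod_cast Nat.one_le_cast.mpr (by omega)
  set n := x.length with hn
  set g : ℕ × V k → ℝ≥0∞ :=
    fun p => wrad k β x * (k : ℝ≥0∞) ^ (max p.1 p.2.length - p.2.length) with hg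
  have hfin := ball_finite x r
  have pointwise : ∀ y : V k, wrad k β y ≤ g (eB x y) := by
    intro y
    have hl1 := lcpLen_le_left x y
    have hl2 := lcpLen_le_right x y
    set ℓ := lcpLen x y with hℓ
    set i := n - ℓ with hi
    set m := y.length - ℓ with hm
    have hfst : (eB x y).1 = i := rfl
    have hsnd : (eB x y).2.length = m := by
      simp [eB, List.length_drop, hm, hℓ]
    have hyl : y.length = n - i + m := by omega
    have hreal : (y.length : ℝ) * β ≤ (n : ℝ) * β + ((max i m - m : ℕ) : ℝ) := by
      rcases Nat.le_total i m with h | h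
      · rw [Nat.max_eq_right h]
        simp only [Nat.sub_self, Nat.cast_zero, add_zero]
        have hyn : (y.length : ℝ) = (n : ℝ) - i + m := by
          rw [hyl]; push_cast [Nat.cast_sub (by omega : i ≤ n)]; ring
        nlinarith [(show (i:ℝ) ≤ (m:ℝ) by exact_mod_cast h)]
      · rw [Nat.max_eq_left h]
        have hyn : (y.length : ℝ) = (n : ℝ) - i + m := by
          rw [hyl]; push_cast [Nat.cast_sub (by omega : i ≤ n)]; ring
        rw [Nat.cast_sub h]
        nlinarith [(show (m:ℝ) ≤ (i:ℝ) by exact_mod_cast h)]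
    calc wrad k β y = (k : ℝ≥0∞) ^ ((y.length : ℝ) * β) := rfl
      _ ≤ (k : ℝ≥0∞) ^ ((n : ℝ) * β + ((max i m - m : ℕ) : ℝ)) :=
          ENNReal.rpow_le_rpow_of_exponent_le hk1 hreal
      _ = (k : ℝ≥0∞) ^ ((n : ℝ) * β) * (k : ℝ≥0∞) ^ (((max i m - m : ℕ) : ℝ)) :=
          ENNReal.rpow_add _ _ hk0 hkt
      _ = wrad k β x * (k : ℝ≥0∞) ^ (max i m - m : ℕ) := by
          rw [ENNReal.rpow_natCast]; rfl
      _ = g (eB x y) := by rw [hg]; simp only [hfst, hsnd]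
  have step1 : wsum (wrad k β) (ball x r) ≤ ∑ p ∈ P x r, g p := by
    rw [wsum_eq_sum hfin]
    calc ∑ y ∈ hfin.toFinset, wrad k β y
        ≤ ∑ y ∈ hfin.toFinset, g (eB x y) :=
          Finset.sum_le_sum (fun y _ => pointwise y)
      _ = ∑ p ∈ hfin.toFinset.image (eB x), g p := by
          rw [Finset.sum_image (fun a _ b _ h => eB_inj x h)]
      _ ≤ ∑ p ∈ P x r, g p := by
          refine Finset.sum_le_sum_of_subset ?_
          intro p hp
          rcases Finset.mem_image.mp hp with ⟨y, hy, rfl⟩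
          exact eB_mem x r (hfin.mem_toFinset.mp hy)
  have disjP : ∀ a ∈ Finset.range (r+1), ∀ b ∈ Finset.range (r+1), a ≠ b →
      Disjoint ((lenFin k (r-a)).image (fun t => (a, t)))
        ((lenFin k (r-b)).image (fun t => (b, t))) := by
    intro a _ b _ hab
    simp only [Finset.disjoint_left, Finset.mem_image]
    rintro p ⟨t, _, rfl⟩ ⟨t', _, h⟩
    exact hab (congrArg Prod.fst h).symm
  have step2 : ∑ p ∈ P x r, g p
      = wrad k β x * ∑ i ∈ Finset.range (r+1),
          ∑ m ∈ Finset.range (r-i+1), ((k^(max i m) : ℕ) : ℝ≥0∞) := by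
    rw [P, Finset.sum_biUnion disjP, Finset.mul_sum]
    refine Finset.sum_congr rfl (fun i _ => ?_)
    rw [Finset.sum_image (by intro a _ b _ h; simpa using h)]
    calc ∑ t ∈ lenFin k (r-i), g (i, t)
        = ∑ m ∈ Finset.range (r-i+1),
            ((k^m : ℕ) : ℝ≥0∞) * (wrad k β x * (k : ℝ≥0∞) ^ (max i m - m)) :=
          sum_lenFin (fun m => wrad k β x * (k : ℝ≥0∞) ^ (max i m - m))
      _ = wrad k β x * ∑ m ∈ Finset.range (r-i+1), ((k^(max i m) : ℕ) : ℝ≥0∞) := by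
          rw [Finset.mul_sum]
          refine Finset.sum_congr rfl (fun m _ => ?_)
          have hmax : m + (max i m - m) = max i m := by omega
          have hsplit : (k:ℝ≥0∞)^m * (k:ℝ≥0∞)^(max i m - m) = (k:ℝ≥0∞)^(max i m) := by
            rw [← pow_add, hmax]
          push_cast
          rw [← hsplit]
          ring
  have step3 : ∑ i ∈ Finset.range (r+1),
      ∑ m ∈ Finset.range (r-i+1), ((k^(max i m) : ℕ) : ℝ≥0∞) ≤ ((8 * k^r : ℕ) : ℝ≥0∞) := by
    have := key_nat hk r
    calc ∑ i ∈ Finset.range (r+1), ∑ m ∈ Finset.range (r-i+1), ((k^(max i m) : ℕ) : ℝ≥0∞)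
        = (((∑ i ∈ Finset.range (r+1), ∑ m ∈ Finset.range (r-i+1), k^(max i m)) : ℕ) : ℝ≥0∞) := by
          push_cast; rfl
      _ ≤ ((8 * k^r : ℕ) : ℝ≥0∞) := by exact_mod_cast this
  calc wsum (wrad k β) (ball x r) ≤ ∑ p ∈ P x r, g p := step1
    _ = wrad k β x * ∑ i ∈ Finset.range (r+1),
          ∑ m ∈ Finset.range (r-i+1), ((k^(max i m) : ℕ) : ℝ≥0∞) := step2
    _ ≤ wrad k β x * ((8 * k^r : ℕ) : ℝ≥0∞) := by
        exact mul_le_mul_right step3 _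
    _ = ((8 * k^r : ℕ) : ℝ≥0∞) * wrad k β x := mul_comm _ _

end weight

end Stmt11Aux

namespace Stmt11Aux

section assemble
variable {k : ℕ} {β : ℝ}

lemma le_Mball (f : V k → ℝ≥0∞) (x : V k) : f x ≤ Mball f x := by
  have h0 : wsum f (ball x 0) / ballCard x 0 = f x := by
    rw [ballCard, ball_zero, wsum_eq_sum (Set.finite_singleton x)]
    simp
  calc f x = wsum f (ball x 0) / ballCard x 0 := h0.symm
    _ ≤ Mball f x := le_iSup (fun r => wsum f (ball x r) / ballCard x r) 0

lemma Mball_wrad_le (hk : 2 ≤ k) (hβ1 : -1 ≤ β) (hβ0 : β ≤ 0) (x : V k) :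
    Mball (wrad k β) x ≤ 8 * wrad k β x := by
  rw [Mball]
  refine iSup_le (fun r => ?_)
  refine ENNReal.div_le_of_le_mul ?_
  calc wsum (wrad k β) (ball x r) ≤ ((8 * k^r : ℕ) : ℝ≥0∞) * wrad k β x :=
      wsum_ball_le hk hβ1 hβ0 x r
    _ ≤ 8 * wrad k β x * ballCard x r := by
        rw [ballCard]
        have h1 : ((k^r : ℕ) : ℝ≥0∞) ≤ (((ball x r).ncard : ℕ) : ℝ≥0∞) :=
          Nat.cast_le.mpr (ballCard_ge x r)
        calc ((8 * k^r : ℕ) : ℝ≥0∞) * wrad k β x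
            = 8 * wrad k β x * ((k^r : ℕ) : ℝ≥0∞) := by push_cast; ring
          _ ≤ 8 * wrad k β x * (((ball x r).ncard : ℕ) : ℝ≥0∞) := mul_le_mul_right h1 _

lemma not_forall_pow_le {a M : ℝ≥0∞} (ha : 1 < a) (hM : M ≠ ⊤) (h : ∀ n : ℕ, a^n ≤ M) :
    False := by
  rcases eq_or_ne a ⊤ with rfl | hat
  · have h1 := h 1
    rw [pow_one] at h1
    exact hM (top_le_iff.mp h1)
  · lift a to ℝ≥0 using hat
    lift M to ℝ≥0 using hM
    rw [ENNReal.one_lt_coe_iff] at ha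
    obtain ⟨n, hn⟩ := pow_unbounded_of_one_lt M ha
    have h2 := h n
    rw [← ENNReal.coe_pow, ENNReal.coe_le_coe] at h2
    exact absurd h2 (not_le.mpr hn)

lemma wrad_nil : wrad k β [] = 1 := by
  simp [wrad]

lemma beta_nonpos (hk : 2 ≤ k) {C : ℝ≥0}
    (H : ∀ x : V k, Mball (wrad k β) x ≤ (C : ℝ≥0∞) * wrad k β x) : β ≤ 0 := by
  by_contra hpos
  push_neg at hpos
  have hk0 : (k : ℝ≥0∞) ≠ 0 := by simp only [ne_eq, Nat.cast_eq_zero]; omega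
  have hkt : (k : ℝ≥0∞) ≠ ⊤ := ENNReal.natCast_ne_top k
  have hk1 : (1 : ℝ≥0∞) < (k : ℝ≥0∞) := by exact_mod_cast Nat.one_lt_cast.mpr (by omega)
  have hup : Mball (wrad k β) ([] : V k) ≤ (C : ℝ≥0∞) := by
    have := H ([] : V k)
    rwa [wrad_nil, mul_one] at this
  have key : ∀ r : ℕ, ((k : ℝ≥0∞) ^ β) ^ r ≤ 4 * C := by
    intro r
    classical
    set Q : Finset (V k) := (Finset.univ : Finset (Fin r → Fin k)).image List.ofFn with hQ
    have hQball : (Q : Set (V k)) ⊆ ball ([] : V k) r := by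
      intro y hy
      rcases Finset.mem_image.mp hy with ⟨f, _, rfl⟩
      show tdist [] _ ≤ r
      rw [tdist_nil_left]
      simp
    have hQcard : Q.card = k^r := by
      rw [hQ, Finset.card_image_of_injective _ List.ofFn_injective]
      simp [Finset.card_univ]
    have hQsum : wsum (wrad k β) (Q : Set (V k))
        = ((k^r : ℕ) : ℝ≥0∞) * (k : ℝ≥0∞) ^ ((r:ℝ) * β) := by
      rw [wsum_eq_sum Q.finite_toSet]
      have : ∀ y ∈ Q.finite_toSet.toFinset, wrad k β y = (k : ℝ≥0∞) ^ ((r:ℝ) * β) := by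
        intro y hy
        rw [Set.Finite.mem_toFinset, Finset.mem_coe, hQ] at hy
        rcases Finset.mem_image.mp hy with ⟨f, _, rfl⟩
        simp [wrad]
      rw [Finset.sum_congr rfl this, Finset.sum_const]
      have hcard : Q.finite_toSet.toFinset.card = k^r := by
        rw [Finset.finite_toSet_toFinset, hQcard]
      rw [hcard]
      simp [nsmul_eq_mul]
    have hwlow : ((k^r : ℕ) : ℝ≥0∞) * (k : ℝ≥0∞) ^ ((r:ℝ) * β)
        ≤ wsum (wrad k β) (ball ([] : V k) r) := by
      rw [← hQsum, wsum, wsum]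
      exact ENNReal.tsum_mono_subtype _ hQball
    have hD : ballCard ([] : V k) r ≤ ((4 * k^r : ℕ) : ℝ≥0∞) :=
      Nat.cast_le.mpr (ballCard_le _ r hk)
    have hlow : (((k^r : ℕ) : ℝ≥0∞) * (k : ℝ≥0∞) ^ ((r:ℝ) * β)) / ((4 * k^r : ℕ) : ℝ≥0∞)
        ≤ Mball (wrad k β) ([] : V k) :=
      le_trans (ENNReal.div_le_div hwlow hD)
        (le_iSup (fun r => wsum (wrad k β) (ball ([] : V k) r) / ballCard ([] : V k) r) r)
    have hcomb := hlow.trans hup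
    have hD0 : ((4 * k^r : ℕ) : ℝ≥0∞) ≠ 0 := by
      simp only [ne_eq, Nat.cast_eq_zero]
      positivity
    have hDt : ((4 * k^r : ℕ) : ℝ≥0∞) ≠ ⊤ := ENNReal.natCast_ne_top _
    rw [ENNReal.div_le_iff_le_mul (Or.inl hD0) (Or.inl hDt)] at hcomb
    -- hcomb : k^r * kE^{rβ} ≤ C * (4 k^r)
    have hrw : (k : ℝ≥0∞) ^ ((r:ℝ) * β) = ((k : ℝ≥0∞) ^ β) ^ r := by
      rw [mul_comm, ENNReal.rpow_mul, ENNReal.rpow_natCast]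
    have hcomb2 : ((k : ℝ≥0∞) ^ β) ^ r * ((k:ℝ≥0∞))^r ≤ (4 * C) * ((k:ℝ≥0∞))^r := by
      calc ((k : ℝ≥0∞) ^ β) ^ r * ((k:ℝ≥0∞))^r
          = ((k^r : ℕ) : ℝ≥0∞) * (k : ℝ≥0∞) ^ ((r:ℝ) * β) := by
            rw [hrw]; push_cast; ring
        _ ≤ (C : ℝ≥0∞) * ((4 * k^r : ℕ) : ℝ≥0∞) := hcomb
        _ = (4 * C) * ((k:ℝ≥0∞))^r := by push_cast; ring
    have hkr0 : ((k:ℝ≥0∞))^r ≠ 0 := pow_ne_zero r hk0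
    have hkrt : ((k:ℝ≥0∞))^r ≠ ⊤ := ENNReal.pow_ne_top hkt
    exact (ENNReal.mul_le_mul_iff_left hkr0 hkrt).mp hcomb2
  have ha : 1 < (k : ℝ≥0∞) ^ β := ENNReal.one_lt_rpow hk1 hpos
  exact not_forall_pow_le ha (ENNReal.mul_ne_top (by simp) ENNReal.coe_ne_top) key

lemma beta_ge_neg_one (hk : 2 ≤ k) {C : ℝ≥0}
    (H : ∀ x : V k, Mball (wrad k β) x ≤ (C : ℝ≥0∞) * wrad k β x) : -1 ≤ β := by
  by_contra hlt
  push_neg at hlt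
  have hk0 : (k : ℝ≥0∞) ≠ 0 := by simp only [ne_eq, Nat.cast_eq_zero]; omega
  have hkt : (k : ℝ≥0∞) ≠ ⊤ := ENNReal.natCast_ne_top k
  have hk1 : (1 : ℝ≥0∞) < (k : ℝ≥0∞) := by exact_mod_cast Nat.one_lt_cast.mpr (by omega)
  have hb1 : (0:ℝ) < -(1+β) := by linarith
  set b : ℝ≥0∞ := (k : ℝ≥0∞) ^ (-(1+β)) with hb
  have hbgt : 1 < b := ENNReal.one_lt_rpow hk1 hb1
  have hb0 : b ≠ 0 := by
    rw [hb]
    exact (ENNReal.rpow_pos (by positivity) hkt).ne'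
  have hbt : b ≠ ⊤ := ENNReal.rpow_ne_top_of_nonneg hb1.le hkt
  have key : ∀ n : ℕ, b ^ n ≤ 4 * C := by
    intro n
    set x : V k := List.replicate n (⟨0, by omega⟩ : Fin k) with hx
    have hxlen : x.length = n := List.length_replicate
    have hmem : ([] : V k) ∈ ball x n := by
      show tdist x [] ≤ n
      rw [tdist_nil_right, hxlen]
    have h1 : (1 : ℝ≥0∞) ≤ wsum (wrad k β) (ball x n) := by
      have := le_wsum (wrad k β) hmem
      rwa [wrad_nil] at this
    have hD : ballCard x n ≤ ((4 * k^n : ℕ) : ℝ≥0∞) := Nat.cast_le.mpr (ballCard_le x n hk)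
    have hlow : (1 : ℝ≥0∞) / ((4 * k^n : ℕ) : ℝ≥0∞) ≤ Mball (wrad k β) x :=
      le_trans (ENNReal.div_le_div h1 hD)
        (le_iSup (fun r => wsum (wrad k β) (ball x r) / ballCard x r) n)
    have hup := H x
    have hcomb := hlow.trans hup
    have hD0 : ((4 * k^n : ℕ) : ℝ≥0∞) ≠ 0 := by
      simp only [ne_eq, Nat.cast_eq_zero]
      positivity
    have hDt : ((4 * k^n : ℕ) : ℝ≥0∞) ≠ ⊤ := ENNReal.natCast_ne_top _
    rw [ENNReal.div_le_iff_le_mul (Or.inl hD0) (Or.inl hDt)] at hcomb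
    -- hcomb : 1 ≤ C * wrad x * (4 k^n)
    have hwx : wrad k β x = (k : ℝ≥0∞) ^ ((n:ℝ) * β) := by
      rw [wrad, hxlen]
    have hbinv : (k : ℝ≥0∞) ^ ((n:ℝ) * β) * ((k:ℝ≥0∞))^n = (b ^ n)⁻¹ := by
      have e1 : (k : ℝ≥0∞) ^ ((n:ℝ) * β) * ((k:ℝ≥0∞))^n
          = (k : ℝ≥0∞) ^ ((n:ℝ) * β + (n:ℝ)) := by
        rw [ENNReal.rpow_add _ _ hk0 hkt, ENNReal.rpow_natCast]
      have e2 : (n:ℝ) * β + (n:ℝ) = (-(1+β)) * (-(n:ℝ)) := by ring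
      rw [e1, e2, ENNReal.rpow_mul, ← hb, ENNReal.rpow_neg, ENNReal.rpow_natCast]
    have hcomb2 : (1 : ℝ≥0∞) ≤ (4 * C) * (b ^ n)⁻¹ := by
      calc (1 : ℝ≥0∞) ≤ (C : ℝ≥0∞) * wrad k β x * ((4 * k^n : ℕ) : ℝ≥0∞) := hcomb
        _ = (4 * C) * ((k : ℝ≥0∞) ^ ((n:ℝ) * β) * ((k:ℝ≥0∞))^n) := by
            rw [hwx]; push_cast; ring
        _ = (4 * C) * (b ^ n)⁻¹ := by rw [hbinv]
    have hbn0 : b ^ n ≠ 0 := pow_ne_zero _ hb0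
    have hbnt : b ^ n ≠ ⊤ := ENNReal.pow_ne_top hbt
    calc b ^ n = b ^ n * 1 := (mul_one _).symm
      _ ≤ b ^ n * ((4 * C) * (b ^ n)⁻¹) := mul_le_mul_right hcomb2 _
      _ = (4 * C) * (b ^ n * (b ^ n)⁻¹) := by ring
      _ = 4 * C := by rw [ENNReal.mul_inv_cancel hbn0 hbnt, mul_one]
  exact not_forall_pow_le hbgt (ENNReal.mul_ne_top (by simp) ENNReal.coe_ne_top) key

end assemble
end Stmt11Aux

/-- On the infinite rooted `k`-ary tree (`k ≥ 2`), `M w_β ≃ w_β` iff `β ∈ [-1,0]`. -/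
theorem stmt11 (k : ℕ) (hk : 2 ≤ k) (β : ℝ) :
    (∃ c C : ℝ≥0, 0 < c ∧ ∀ x : V k,
        (c : ℝ≥0∞) * wrad k β x ≤ Mball (wrad k β) x ∧
        Mball (wrad k β) x ≤ (C : ℝ≥0∞) * wrad k β x) ↔
      β ∈ Set.Icc (-1 : ℝ) 0 := by
  constructor
  · rintro ⟨c, C, hc, H⟩
    have H2 : ∀ x : V k, Mball (wrad k β) x ≤ (C : ℝ≥0∞) * wrad k β x := fun x => (H x).2
    exact ⟨Stmt11Aux.beta_ge_neg_one hk H2, Stmt11Aux.beta_nonpos hk H2⟩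
  · rintro ⟨hβ1, hβ0⟩
    refine ⟨1, 8, one_pos, fun x => ⟨?_, ?_⟩⟩
    · simpa using Stmt11Aux.le_Mball (wrad k β) x
    · have h := Stmt11Aux.Mball_wrad_le hk hβ1 hβ0 x
      have h8 : ((8 : ℝ≥0) : ℝ≥0∞) = 8 := by norm_num
      rw [h8]
      exact h
end
end

section
/- Let T be the infinite rooted k-ary tree with k ≥ 2 and w a weight. If the weighted weak-type (1,1) estimate w({x : M°f(x) > λ}) ≤ c_w (1/λ) Σ_{x∈T} |f(x)| w(x) holds for all f and λ > 0, then M°w(x) ≲ w(x) for all x ∈ T (equivalently, Mw ≲ w). -/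
open scoped ENNReal NNReal BigOperators

noncomputable section

/-! ### Auxiliary lemmas -/

section Aux
variable {k : ℕ}

lemma lcpLen_le_left : ∀ (a b : List (Fin k)), lcpLen a b ≤ a.length
  | [], _ => by simp [lcpLen]
  | _ :: _, [] => by simp [lcpLen]
  | a :: as, b :: bs => by
      simp only [lcpLen]
      split
      · simpa using lcpLen_le_left as bs
      · simp

lemma lcpLen_comm : ∀ (a b : List (Fin k)), lcpLen a b = lcpLen b a
  | [], [] => rfl
  | [], _ :: _ => rfl
  | _ :: _, [] => rfl
  | a :: as, b :: bs => by
      simp only [lcpLen]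
      rcases eq_or_ne a b with h | h
      · simp [h, lcpLen_comm as bs]
      · simp [h, Ne.symm h]

lemma lcpLen_le_right (a b : List (Fin k)) : lcpLen a b ≤ b.length := by
  rw [lcpLen_comm]; exact lcpLen_le_left b a

lemma take_lcpLen : ∀ (a b : List (Fin k)),
    a.take (lcpLen a b) = b.take (lcpLen a b)
  | [], _ => by simp [lcpLen]
  | _ :: _, [] => by simp [lcpLen]
  | a :: as, b :: bs => by
      simp only [lcpLen]
      rcases eq_or_ne a b with h | h
      · simp [h, take_lcpLen as bs]
      · simp [h]

lemma lcpLen_append : ∀ (a b : List (Fin k)), lcpLen a (a ++ b) = a.length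
  | [], b => by cases b <;> simp [lcpLen]
  | a :: as, b => by simp [lcpLen, lcpLen_append as b]

lemma tdist_comm (x y : V k) : tdist x y = tdist y x := by
  unfold tdist; rw [lcpLen_comm]; omega

/-- Finset of words of exact length `r`. -/
def wordsE (k : ℕ) : ℕ → Finset (List (Fin k))
  | 0 => {[]}
  | r + 1 => Finset.image (fun p : Fin k × List (Fin k) => p.1 :: p.2)
      (Finset.univ ×ˢ wordsE k r)

lemma mem_wordsE : ∀ (r : ℕ) (l : List (Fin k)), l ∈ wordsE k r ↔ l.length = r
  | 0, l => by cases l <;> simp [wordsE]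
  | r + 1, l => by
      cases l with
      | nil => simp [wordsE]
      | cons a as => simp [wordsE, mem_wordsE r]

lemma card_wordsE : ∀ r : ℕ, (wordsE k r).card = k ^ r
  | 0 => by simp [wordsE]
  | r + 1 => by
      have hinj : Function.Injective (fun p : Fin k × List (Fin k) => p.1 :: p.2) := by
        intro p q h
        simp only [List.cons.injEq] at h
        exact Prod.ext h.1 h.2
      rw [wordsE, Finset.card_image_of_injective _ hinj, Finset.card_product,
        Finset.card_univ, Fintype.card_fin, card_wordsE r]
      ring

/-- Finset of words of length `≤ r`. -/
def wordsLE (k r : ℕ) : Finset (List (Fin k)) :=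
  (Finset.range (r + 1)).biUnion (fun j => wordsE k j)

lemma mem_wordsLE {r : ℕ} (l : List (Fin k)) : l ∈ wordsLE k r ↔ l.length ≤ r := by
  simp only [wordsLE, Finset.mem_biUnion, Finset.mem_range, mem_wordsE]
  constructor
  · rintro ⟨j, hj, rfl⟩; omega
  · intro h; exact ⟨l.length, by omega, rfl⟩

lemma card_wordsLE (hk : 2 ≤ k) (r : ℕ) : (wordsLE k r).card ≤ 2 * k ^ r := by
  have key : ∀ r : ℕ, ∑ j ∈ Finset.range (r + 1), k ^ j ≤ 2 * k ^ r := by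
    intro r
    induction r with
    | zero => simp
    | succ n ih =>
        rw [Finset.sum_range_succ]
        calc ∑ j ∈ Finset.range (n + 1), k ^ j + k ^ (n + 1)
            ≤ 2 * k ^ n + k ^ (n + 1) := by omega
          _ ≤ 2 * k ^ (n + 1) := by
              rw [pow_succ]
              nlinarith [Nat.one_le_pow n k (show 0 < k by omega)]
  calc (wordsLE k r).card ≤ ∑ j ∈ Finset.range (r + 1), (wordsE k j).card :=
        Finset.card_biUnion_le
    _ = ∑ j ∈ Finset.range (r + 1), k ^ j := by simp [card_wordsE]
    _ ≤ 2 * k ^ r := key r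

lemma sph_maps (y : V k) (r : ℕ) {z : V k} (hz : z ∈ sph y r) :
    (z.drop (lcpLen y z)).length ≤ r := by
  have h1 := lcpLen_le_left y z
  have h2 := lcpLen_le_right y z
  have h3 : (y.length - lcpLen y z) + (z.length - lcpLen y z) = r := hz
  simp only [List.length_drop]
  omega

lemma sph_injOn (y : V k) (r : ℕ) :
    Set.InjOn (fun z => z.drop (lcpLen y z)) (sph y r) := by
  intro z1 h1 z2 h2 heq
  simp only at heq
  have hy1 : lcpLen y z1 ≤ y.length := lcpLen_le_left y z1
  have hz1 : lcpLen y z1 ≤ z1.length := lcpLen_le_right y z1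
  have hy2 : lcpLen y z2 ≤ y.length := lcpLen_le_left y z2
  have hz2 : lcpLen y z2 ≤ z2.length := lcpLen_le_right y z2
  have ht1 : (y.length - lcpLen y z1) + (z1.length - lcpLen y z1) = r := h1
  have ht2 : (y.length - lcpLen y z2) + (z2.length - lcpLen y z2) = r := h2
  have hlen : (z1.drop (lcpLen y z1)).length = (z2.drop (lcpLen y z2)).length := by
    rw [heq]
  simp only [List.length_drop] at hlen
  have hd : lcpLen y z1 = lcpLen y z2 := by omega
  have e1 : z1 = y.take (lcpLen y z1) ++ z1.drop (lcpLen y z1) := by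
    conv_lhs => rw [← List.take_append_drop (lcpLen y z1) z1]
    rw [take_lcpLen y z1]
  have e2 : z2 = y.take (lcpLen y z2) ++ z2.drop (lcpLen y z2) := by
    conv_lhs => rw [← List.take_append_drop (lcpLen y z2) z2]
    rw [take_lcpLen y z2]
  rw [e1, e2, heq, hd]

lemma sph_finite (y : V k) (r : ℕ) : (sph y r).Finite := by
  apply Set.Finite.of_finite_image _ (sph_injOn y r)
  apply Set.Finite.subset (wordsLE k r).finite_toSet
  rintro _ ⟨z, hz, rfl⟩
  exact (mem_wordsLE _).2 (sph_maps y r hz)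

lemma ncard_sph_le (hk : 2 ≤ k) (y : V k) (r : ℕ) : (sph y r).ncard ≤ 2 * k ^ r := by
  have h1 : ((fun z => z.drop (lcpLen y z)) '' sph y r).ncard = (sph y r).ncard :=
    Set.ncard_image_of_injOn (sph_injOn y r)
  rw [← h1]
  calc ((fun z => z.drop (lcpLen y z)) '' sph y r).ncard
      ≤ ((wordsLE k r : Set (List (Fin k)))).ncard := by
        apply Set.ncard_le_ncard _ (wordsLE k r).finite_toSet
        rintro _ ⟨z, hz, rfl⟩
        exact (mem_wordsLE _).2 (sph_maps y r hz)
    _ = (wordsLE k r).card := Set.ncard_coe_finset _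
    _ ≤ 2 * k ^ r := card_wordsLE hk r

lemma ncard_sph_ge (x : V k) (r : ℕ) : k ^ r ≤ (sph x r).ncard := by
  have himg : (fun s => x ++ s) '' (wordsE k r : Set (List (Fin k))) ⊆ sph x r := by
    rintro _ ⟨s, hs, rfl⟩
    have hsl : s.length = r := (mem_wordsE r s).1 hs
    show tdist x (x ++ s) = r
    unfold tdist
    rw [lcpLen_append]
    simp [List.length_append]
    omega
  have hinj : Set.InjOn (fun s => x ++ s) (wordsE k r : Set (List (Fin k))) := by
    intro a _ b _ h
    simpa using h
  calc k ^ r = (wordsE k r).card := (card_wordsE r).symm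
    _ = ((wordsE k r : Set (List (Fin k)))).ncard := (Set.ncard_coe_finset _).symm
    _ = ((fun s => x ++ s) '' (wordsE k r : Set (List (Fin k)))).ncard :=
        (Set.ncard_image_of_injOn hinj).symm
    _ ≤ (sph x r).ncard := Set.ncard_le_ncard himg (sph_finite x r)

lemma wsum_delta (x0 : V k) {A : Set (V k)} (hx : x0 ∈ A) :
    wsum (fun z => if z = x0 then (1 : ℝ≥0∞) else 0) A = 1 := by
  unfold wsum
  rw [tsum_eq_single (⟨x0, hx⟩ : A)]
  · simp
  · intro b hb
    have : (b : V k) ≠ x0 := fun h => hb (Subtype.ext h)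
    simp [this]

end Aux

/-- Necessity: if the weighted weak type (1,1) estimate for `M°` holds for `w`,
then `M°w ≲ w` pointwise. -/
theorem stmt13 (k : ℕ) (hk : 2 ≤ k) (w : V k → ℝ≥0∞) (cw : ℝ≥0)
    (hw : ∀ (f : V k → ℝ) (lam : ℝ), 0 < lam →
      wsum w {x : V k | ENNReal.ofReal lam < Msph (absE f) x} ≤
        (cw : ℝ≥0∞) * (ENNReal.ofReal lam)⁻¹ *
          ∑' x : V k, ENNReal.ofReal |f x| * w x) :
    ∃ C : ℝ≥0, ∀ x : V k, Msph w x ≤ (C : ℝ≥0∞) * w x := by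
  refine ⟨4 * cw, fun x => ?_⟩
  rw [Msph]
  refine iSup_le fun r => ?_
  have hkr : 1 ≤ k ^ r := Nat.one_le_pow _ _ (by omega)
  -- test function: delta at x
  set f : V k → ℝ := fun z => if z = x then 1 else 0 with hf
  have habs : absE f = fun z => if z = x then (1 : ℝ≥0∞) else 0 := by
    funext z
    simp only [absE, hf]
    split <;> simp
  -- the level
  set lam : ℝ := (((4 * k ^ r : ℕ) : ℝ))⁻¹ with hlam
  have hlampos : 0 < lam := by
    rw [hlam]
    have : (0 : ℝ) < ((4 * k ^ r : ℕ) : ℝ) := by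
      exact_mod_cast Nat.pos_of_ne_zero (by positivity)
    positivity
  have hofreal : ENNReal.ofReal lam = (((4 * k ^ r : ℕ) : ℝ≥0∞))⁻¹ := by
    rw [hlam, ENNReal.ofReal_inv_of_pos (by exact_mod_cast Nat.pos_of_ne_zero (by positivity)),
      ENNReal.ofReal_natCast]
  -- superlevel set contains the sphere
  have hsub : sph x r ⊆ {y : V k | ENNReal.ofReal lam < Msph (absE f) y} := by
    intro y hy
    have hxy : x ∈ sph y r := by
      have : tdist x y = r := hy
      show tdist y x = r
      rw [tdist_comm]; exact this
    have havg : sphAvg (absE f) y r = (sphCard y r)⁻¹ := by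
      rw [sphAvg, habs, wsum_delta x hxy, one_div]
    have hcard_le : sphCard y r ≤ ((2 * k ^ r : ℕ) : ℝ≥0∞) := by
      rw [sphCard]
      exact_mod_cast Nat.cast_le.2 (ncard_sph_le hk y r)
    have hlt : ENNReal.ofReal lam < (sphCard y r)⁻¹ := by
      rw [hofreal]
      refine lt_of_lt_of_le ?_ (ENNReal.inv_le_inv.2 hcard_le)
      rw [ENNReal.inv_lt_inv]
      have h2 : (2 * k ^ r : ℕ) < 4 * k ^ r := by omega
      exact_mod_cast h2
    refine lt_of_lt_of_le hlt ?_
    rw [← havg]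
    exact le_iSup (fun r => sphAvg (absE f) y r) r
  -- the tsum on the right
  have htsum : ∑' z : V k, ENNReal.ofReal |f z| * w z = w x := by
    rw [tsum_eq_single x]
    · simp [hf]
    · intro b hb
      simp [hf, hb]
  -- weak type estimate applied
  have hwsum : wsum w (sph x r) ≤ (cw : ℝ≥0∞) * ((4 * k ^ r : ℕ) : ℝ≥0∞) * w x := by
    calc wsum w (sph x r)
        ≤ wsum w {y : V k | ENNReal.ofReal lam < Msph (absE f) y} := wsum_mono w hsub
      _ ≤ (cw : ℝ≥0∞) * (ENNReal.ofReal lam)⁻¹ * ∑' z : V k, ENNReal.ofReal |f z| * w z :=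
          hw f lam hlampos
      _ = (cw : ℝ≥0∞) * ((4 * k ^ r : ℕ) : ℝ≥0∞) * w x := by
          rw [hofreal, inv_inv, htsum]
  -- conclude
  have hcard_ge : ((k ^ r : ℕ) : ℝ≥0∞) ≤ sphCard x r := by
    rw [sphCard]
    exact_mod_cast ncard_sph_ge x r
  have hK0 : ((k ^ r : ℕ) : ℝ≥0∞) ≠ 0 := by
    have : (k ^ r : ℕ) ≠ 0 := by omega
    exact_mod_cast this
  have hKtop : ((k ^ r : ℕ) : ℝ≥0∞) ≠ ⊤ := ENNReal.natCast_ne_top _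
  calc sphAvg w x r = wsum w (sph x r) / sphCard x r := rfl
    _ ≤ ((cw : ℝ≥0∞) * ((4 * k ^ r : ℕ) : ℝ≥0∞) * w x) / ((k ^ r : ℕ) : ℝ≥0∞) :=
        ENNReal.div_le_div hwsum hcard_ge
    _ = ((4 * cw : ℝ≥0) : ℝ≥0∞) * w x := by
        have h4 : ((4 * k ^ r : ℕ) : ℝ≥0∞) = 4 * ((k ^ r : ℕ) : ℝ≥0∞) := by push_cast; ring
        rw [h4, show (cw : ℝ≥0∞) * (4 * ((k ^ r : ℕ) : ℝ≥0∞)) * w x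
            = ((4 : ℝ≥0∞) * cw * w x) * ((k ^ r : ℕ) : ℝ≥0∞) from by ring,
          mul_div_assoc, ENNReal.div_self hK0 hKtop, mul_one]
        push_cast
        ring
end
end
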